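/- arXiv:1905.08837 — 2 statements merged into one kernel-verified Lean document; each statement's English description precedes it below -/
import Mathlib

section
/- Let φ = ϑ∘f be fully subamenable at x̄ and v̄ ∈ ∂φ(x̄). Then ∂φ(x̄) = ∂_p φ(x̄), i.e., every limiting subgradient of φ at x̄ is a proximal subgradient, and the domain of the second subderivative equals the critical cone: dom d²φ(x̄, v̄) = K_φ(x̄, v̄) := {w ∈ ℝⁿ : dφ(x̄)(w) = ⟨v̄, w⟩}. -/
open Filter Topology Metric Set

noncomputable section

abbrev Euc (n : ℕ) := EuclideanSpace ℝ (Fin n)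

def edom {X : Type*} (φ : X → EReal) : Set X := {x | φ x ≠ ⊤}

section NormedDefs

variable {X Y : Type*} [NormedAddCommGroup X] [NormedSpace ℝ X]
  [NormedAddCommGroup Y] [NormedSpace ℝ Y]

/-- Bouligand (contingent) tangent cone. -/
def tangentConeB (Ω : Set X) (x : X) : Set X :=
  {w | ∃ t : ℕ → ℝ, ∃ wk : ℕ → X, (∀ k, 0 < t k) ∧ Tendsto t atTop (𝓝 0) ∧
      Tendsto wk atTop (𝓝 w) ∧ ∀ k, x + t k • wk k ∈ Ω}

/-- Second-order tangent set. -/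
def secondTangent (Ω : Set X) (x w : X) : Set X :=
  {u | ∃ t : ℕ → ℝ, ∃ uk : ℕ → X, (∀ k, 0 < t k) ∧ Tendsto t atTop (𝓝 0) ∧
      Tendsto uk atTop (𝓝 u) ∧ ∀ k, x + t k • w + ((t k) ^ 2 / 2) • uk k ∈ Ω}

/-- Subderivative (first-order epi-derivative). -/
def subderiv (φ : X → EReal) (x w : X) : EReal :=
  liminf (fun p : ℝ × X => ((p.1⁻¹ : ℝ) : EReal) * (φ (x + p.1 • p.2) - φ x))
    ((𝓝[>] (0:ℝ)) ×ˢ 𝓝 w)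

/-- `f` is twice differentiable at `x`: differentiable nearby and its derivative is
differentiable at `x`. -/
def TwiceDiffAt (f : X → Y) (x : X) : Prop :=
  (∀ᶠ y in 𝓝 x, DifferentiableAt ℝ f y) ∧ DifferentiableAt ℝ (fderiv ℝ f) x

/-- The second derivative of `f` at `x` evaluated at `(w, w)`. -/
def D2 (f : X → Y) (x w : X) : Y := fderiv ℝ (fderiv ℝ f) x w w

/-- Lipschitz continuity of `φ` around `x` relative to its domain, with constant `ℓ`. -/
def LipRelDom (φ : X → EReal) (x : X) (ℓ : ℝ) : Prop :=
  ∃ U ∈ 𝓝 x, ∀ y ∈ U, ∀ z ∈ U, φ y ≠ ⊤ → φ z ≠ ⊤ →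
    φ y ≤ φ z + ((ℓ * ‖y - z‖ : ℝ) : EReal)

/-- Metric subregularity of the mapping `x ↦ f x - D` at `(x, 0)` with constant `κ`:
the metric subregularity qualification condition. -/
def MSQCAt (f : X → Y) (D : Set Y) (x : X) (κ : ℝ) : Prop :=
  0 ≤ κ ∧ ∀ᶠ u in 𝓝 x, Metric.infDist u (f ⁻¹' D) ≤ κ * Metric.infDist (f u) D

/-- Epigraph of an extended-real-valued function. -/
def epiSet (ϑ : Y → EReal) : Set (Y × ℝ) := {p | ϑ p.1 ≤ (p.2 : EReal)}

end NormedDefs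

section InnerDefs

variable {X : Type*} [NormedAddCommGroup X] [InnerProductSpace ℝ X]

/-- Regular (Fréchet) subdifferential. -/
def frechetSubdiff (φ : X → EReal) (x : X) : Set X :=
  {v | ∀ ε : ℝ, 0 < ε → ∀ᶠ y in 𝓝 x,
      φ x + (((inner ℝ v (y - x) : ℝ) - ε * ‖y - x‖ : ℝ) : EReal) ≤ φ y}

/-- Limiting (Mordukhovich) subdifferential. -/
def limSubdiff (φ : X → EReal) (x : X) : Set X :=
  {v | ∃ xk : ℕ → X, ∃ vk : ℕ → X, Tendsto xk atTop (𝓝 x) ∧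
      Tendsto (fun k => φ (xk k)) atTop (𝓝 (φ x)) ∧
      Tendsto vk atTop (𝓝 v) ∧ ∀ k, vk k ∈ frechetSubdiff φ (xk k)}

/-- Proximal subdifferential. -/
def proxSubdiff (φ : X → EReal) (x : X) : Set X :=
  {v | ∃ r > (0:ℝ), ∃ γ > (0:ℝ), ∀ y ∈ Metric.ball x γ,
      φ x + (((inner ℝ v (y - x) : ℝ) - r / 2 * ‖y - x‖ ^ 2 : ℝ) : EReal) ≤ φ y}

/-- Second-order difference quotient. -/
def quadDiff (φ : X → EReal) (x v : X) (t : ℝ) (u : X) : EReal :=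
  ((2 / t ^ 2 : ℝ) : EReal) * (φ (x + t • u) - φ x - ((t * (inner ℝ v u : ℝ) : ℝ) : EReal))

/-- Second subderivative of `φ` at `x` for `v`. -/
def secondSubderiv (φ : X → EReal) (x v w : X) : EReal :=
  liminf (fun p : ℝ × X => quadDiff φ x v p.1 p.2) ((𝓝[>] (0:ℝ)) ×ˢ 𝓝 w)

/-- Parabolic subderivative of `φ` at `x` for `w` with respect to `z`. -/
def parabolicSubderiv (φ : X → EReal) (x w z : X) : EReal :=
  liminf (fun p : ℝ × X =>
      ((2 / p.1 ^ 2 : ℝ) : EReal) *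
        (φ (x + p.1 • w + (p.1 ^ 2 / 2) • p.2) - φ x - (p.1 : EReal) * subderiv φ x w))
    ((𝓝[>] (0:ℝ)) ×ˢ 𝓝 z)

/-- Critical cone of `φ` at `x` for `v`. -/
def critCone (φ : X → EReal) (x v : X) : Set X :=
  {w | subderiv φ x w = ((inner ℝ v w : ℝ) : EReal)}

/-- Convex polyhedral set. -/
def IsPolyhedral (Ω : Set X) : Prop :=
  ∃ (k : ℕ) (c : Fin k → X) (b : Fin k → ℝ), Ω = {x | ∀ i, (inner ℝ (c i) x : ℝ) ≤ b i}

/-- Polar cone. -/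
def polarCone (C : Set X) : Set X := {y | ∀ u ∈ C, (inner ℝ y u : ℝ) ≤ 0}

/-- A piecewise linear-quadratic representation of `ϑ`. -/
structure PLQRepr (ϑ : X → EReal) where
  s : ℕ
  piece : Fin s → Set X
  A : Fin s → (X →L[ℝ] X)
  a : Fin s → X
  cst : Fin s → ℝ
  poly : ∀ i, IsPolyhedral (piece i)
  symm : ∀ i x y, (inner ℝ (A i x) y : ℝ) = (inner ℝ x (A i y) : ℝ)
  dom_eq : edom ϑ = ⋃ i, piece i
  val : ∀ i, ∀ x ∈ piece i,
    ϑ x = ((1 / 2 * (inner ℝ (A i x) x : ℝ) + (inner ℝ (a i) x : ℝ) + cst i : ℝ) : EReal)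

/-- `ϑ` is piecewise linear-quadratic. -/
def IsPLQ (ϑ : X → EReal) : Prop := Nonempty (PLQRepr ϑ)

/-- Twice epi-differentiability of `φ` at `x` for `v`, via the recovery-sequence
characterization of epi-convergence of second-order difference quotients. -/
def TwiceEpiDiffAt (φ : X → EReal) (x v : X) : Prop :=
  ∀ w : X, ∀ t : ℕ → ℝ, (∀ k, 0 < t k) → Tendsto t atTop (𝓝 0) →
    ∃ wk : ℕ → X, Tendsto wk atTop (𝓝 w) ∧
      Tendsto (fun k => quadDiff φ x v (t k) (wk k)) atTop (𝓝 (secondSubderiv φ x v w))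

end InnerDefs

/-- Convexity for extended-real-valued functions. -/
def ERealConvexOn {X : Type*} [AddCommGroup X] [Module ℝ X] (φ : X → EReal) : Prop :=
  ∀ x y : X, ∀ t : ℝ, 0 ≤ t → t ≤ 1 →
    φ (t • x + (1 - t) • y) ≤ (t : EReal) * φ x + ((1 - t : ℝ) : EReal) * φ y

/-- The Lagrange multiplier set associated with `(x, v)` for the composition `ϑ ∘ f`. -/
def multSet {n m : ℕ} (f : Euc n → Euc m) (ϑ : Euc m → EReal) (x : Euc n) (v : Euc n) :
    Set (Euc m) :=
  {lam | lam ∈ limSubdiff ϑ (f x) ∧ ContinuousLinearMap.adjoint (fderiv ℝ f x) lam = v}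

section Stmt10Aux
open Filter Topology Metric Set

namespace Stmt10Aux

/-! ### Filter and EReal utilities -/

lemma neBotF {X : Type*} [NormedAddCommGroup X] (w : X) :
    ((𝓝[>] (0:ℝ)) ×ˢ 𝓝 w).NeBot := by
  exact Filter.prod_neBot.mpr ⟨by infer_instance, by infer_instance⟩

lemma tendsto_pair {X : Type*} [NormedAddCommGroup X] {w : X} {t : ℕ → ℝ} {u : ℕ → X}
    (ht0 : ∀ k, 0 < t k) (ht : Tendsto t atTop (𝓝 0)) (hu : Tendsto u atTop (𝓝 w)) :
    Tendsto (fun k => (t k, u k)) atTop ((𝓝[>] (0:ℝ)) ×ˢ 𝓝 w) :=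
  (tendsto_nhdsWithin_of_tendsto_nhds_of_eventually_within t ht
    (Filter.Eventually.of_forall ht0)).prodMk hu

lemma liminf_le_of_seq {X : Type*} [NormedAddCommGroup X] {w : X} {g : ℝ × X → EReal}
    {t : ℕ → ℝ} {u : ℕ → X} {c : EReal}
    (ht0 : ∀ k, 0 < t k) (ht : Tendsto t atTop (𝓝 0)) (hu : Tendsto u atTop (𝓝 w))
    (hc : ∀ k, g (t k, u k) ≤ c) :
    Filter.liminf g ((𝓝[>] (0:ℝ)) ×ˢ 𝓝 w) ≤ c := by
  refine Filter.liminf_le_of_frequently_le ?_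
  exact (tendsto_pair ht0 ht hu).frequently (Filter.Frequently.of_forall hc)

lemma exists_seq_of_frequently {X : Type*} [NormedAddCommGroup X] {w : X}
    {Q : ℕ → ℝ × X → Prop}
    (h : ∀ j : ℕ, ∃ᶠ p in (𝓝[>] (0:ℝ)) ×ˢ 𝓝 w, Q j p) :
    ∃ t : ℕ → ℝ, ∃ u : ℕ → X, (∀ j, 0 < t j) ∧ Tendsto t atTop (𝓝 0) ∧
      Tendsto u atTop (𝓝 w) ∧ ∀ j, Q j (t j, u j) := by
  have key : ∀ j : ℕ, ∃ p : ℝ × X, (p.1 ∈ Ioo (0:ℝ) (1/(j+1))) ∧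
      p.2 ∈ ball w (1/(j+1)) ∧ Q j p := by
    intro j
    have hmem : (Ioo (0:ℝ) (1/(j+1))) ×ˢ ball w (1/(j+1)) ∈ (𝓝[>] (0:ℝ)) ×ˢ 𝓝 w :=
      Filter.prod_mem_prod (Ioo_mem_nhdsGT_of_mem ⟨le_refl _, by positivity⟩)
        (ball_mem_nhds _ (by positivity))
    obtain ⟨p, hp, hq⟩ := Filter.frequently_iff.mp (h j) hmem
    exact ⟨p, hp.1, hp.2, hq⟩
  choose p h1 h2 h3 using key
  refine ⟨fun j => (p j).1, fun j => (p j).2, fun j => (h1 j).1, ?_, ?_, fun j => by simpa using h3 j⟩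
  · exact squeeze_zero (fun j => (h1 j).1.le) (fun j => (h1 j).2.le)
      tendsto_one_div_add_atTop_nhds_zero_nat
  · rw [tendsto_iff_dist_tendsto_zero]
    exact squeeze_zero (fun j => dist_nonneg) (fun j => (mem_ball.mp (h2 j)).le)
      tendsto_one_div_add_atTop_nhds_zero_nat

lemma le_liminf_of_coe {α : Type*} {F : Filter α} [F.NeBot] {g : α → EReal} {h : α → ℝ} {L : ℝ}
    (hle : ∀ᶠ p in F, ((h p : ℝ) : EReal) ≤ g p) (hh : Tendsto h F (𝓝 L)) :
    (L : EReal) ≤ Filter.liminf g F := by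
  have h1 : Filter.liminf (fun p => ((h p : ℝ) : EReal)) F = (L : EReal) :=
    (EReal.tendsto_coe.mpr hh).liminf_eq
  rw [← h1]
  exact Filter.liminf_le_liminf hle

lemma ereal_eq_coe {a : EReal} (h1 : a ≠ ⊤) (h2 : a ≠ ⊥) : a = ((a.toReal : ℝ) : EReal) :=
  (EReal.coe_toReal h1 h2).symm

lemma ge_sub_of_forall_pos {a b c : ℝ} (hc : 0 ≤ c) (h : ∀ ε : ℝ, 0 < ε → b - ε * c ≤ a) :
    b ≤ a := by
  rcases eq_or_lt_of_le hc with h0 | h0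
  · simpa [← h0] using h 1 one_pos
  · by_contra hab
    push_neg at hab
    have h2 := h ((b - a) / (2 * c)) (div_pos (by linarith) (by linarith))
    have h3 : (b - a) / (2 * c) * c = (b - a) / 2 := by
      field_simp
    rw [h3] at h2
    linarith

end Stmt10Aux
end Stmt10Aux
section Stmt10Aux2
open Filter Topology Metric Set
namespace Stmt10Aux

variable {X : Type*} [NormedAddCommGroup X] [InnerProductSpace ℝ X]

/-! ### Real forms of the difference quotients -/

lemma subQuot_coe {φ : X → EReal} {x : X} {t : ℝ} {u : X}
    (h1 : φ (x + t • u) ≠ ⊤) (h1' : φ (x + t • u) ≠ ⊥) (h2 : φ x ≠ ⊤) (h2' : φ x ≠ ⊥) :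
    ((t⁻¹ : ℝ) : EReal) * (φ (x + t • u) - φ x)
      = ((t⁻¹ * ((φ (x + t • u)).toReal - (φ x).toReal) : ℝ) : EReal) := by
  rw [ereal_eq_coe h1 h1', ereal_eq_coe h2 h2', ← EReal.coe_sub, ← EReal.coe_mul]
  simp

lemma subQuot_top {φ : X → EReal} {x : X} {t : ℝ} {u : X} (ht : 0 < t)
    (h1 : φ (x + t • u) = ⊤) (h2 : φ x ≠ ⊤) (h2' : φ x ≠ ⊥) :
    ((t⁻¹ : ℝ) : EReal) * (φ (x + t • u) - φ x) = ⊤ := by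
  rw [h1, ereal_eq_coe h2 h2', EReal.top_sub_coe]
  exact EReal.coe_mul_top_of_pos (by positivity)

lemma quadDiff_coe {φ : X → EReal} {x v : X} {t : ℝ} {u : X}
    (h1 : φ (x + t • u) ≠ ⊤) (h1' : φ (x + t • u) ≠ ⊥) (h2 : φ x ≠ ⊤) (h2' : φ x ≠ ⊥) :
    quadDiff φ x v t u =
      (((2 / t ^ 2) * ((φ (x + t • u)).toReal - (φ x).toReal - t * (inner ℝ v u : ℝ)) : ℝ) : EReal) := by
  unfold quadDiff
  rw [ereal_eq_coe h1 h1', ereal_eq_coe h2 h2', ← EReal.coe_sub, ← EReal.coe_sub, ← EReal.coe_mul]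
  simp

lemma quadDiff_top {φ : X → EReal} {x v : X} {t : ℝ} {u : X} (ht : t ≠ 0)
    (h1 : φ (x + t • u) = ⊤) (h2 : φ x ≠ ⊤) (h2' : φ x ≠ ⊥) :
    quadDiff φ x v t u = ⊤ := by
  unfold quadDiff
  rw [h1, ereal_eq_coe h2 h2', EReal.top_sub_coe, EReal.top_sub_coe]
  exact EReal.coe_mul_top_of_pos (by positivity)

/-! ### Convexity consequences -/

lemma convex_pt {X : Type*} [AddCommGroup X] [Module ℝ X] {ϑ : X → EReal}
    (hconv : ERealConvexOn ϑ) (hbot : ∀ y, ϑ y ≠ ⊥)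
    {p q : X} (hp : ϑ p ≠ ⊤) (hq : ϑ q ≠ ⊤) {t : ℝ} (ht0 : 0 ≤ t) (ht1 : t ≤ 1) :
    ϑ (t • p + (1 - t) • q) ≠ ⊤ ∧
    (ϑ (t • p + (1 - t) • q)).toReal ≤ t * (ϑ p).toReal + (1 - t) * (ϑ q).toReal := by
  have h := hconv p q t ht0 ht1
  rw [ereal_eq_coe hp (hbot p), ereal_eq_coe hq (hbot q), ← EReal.coe_mul, ← EReal.coe_mul,
    ← EReal.coe_add] at h
  have htop : ϑ (t • p + (1 - t) • q) ≠ ⊤ := by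
    intro hT
    rw [hT] at h
    exact EReal.coe_ne_top _ (top_le_iff.mp h)
  refine ⟨htop, ?_⟩
  rw [ereal_eq_coe htop (hbot _)] at h
  exact EReal.coe_le_coe_iff.mp h

lemma edom_convex {X : Type*} [AddCommGroup X] [Module ℝ X] {ϑ : X → EReal}
    (hconv : ERealConvexOn ϑ) (hbot : ∀ y, ϑ y ≠ ⊥) : Convex ℝ (edom ϑ) := by
  intro p hp q hq a b ha hb hab
  have hb' : b = 1 - a := by linarith
  subst hb'
  exact (convex_pt hconv hbot hp hq ha (by linarith)).1

lemma comb_eq {Z : Type*} [AddCommGroup Z] [Module ℝ Z] (t : ℝ) (a b : Z) :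
    (1 - t) • a + (1 - (1 - t)) • b = a + t • (b - a) := by
  rw [sub_smul, sub_smul, one_smul, sub_smul, one_smul, smul_sub]
  abel

/-! ### Polyhedral facts -/

lemma poly_isClosed {Ω : Set X} (h : IsPolyhedral Ω) : IsClosed Ω := by
  obtain ⟨k, c, b, rfl⟩ := h
  have he : {x : X | ∀ i, (inner ℝ (c i) x : ℝ) ≤ b i} = ⋂ i, {x | (inner ℝ (c i) x : ℝ) ≤ b i} := by
    ext x; simp
  rw [he]
  exact isClosed_iInter fun i =>
    isClosed_le (Continuous.inner continuous_const continuous_id) continuous_const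

lemma exists_subseq_mem {Y : Type*} {ι : Type*} [Finite ι] {P : ι → Set Y} {y : ℕ → Y}
    (h : ∀ k, ∃ i, y k ∈ P i) :
    ∃ i, ∃ σ : ℕ → ℕ, Tendsto σ atTop atTop ∧ ∀ j, y (σ j) ∈ P i := by
  choose idx hidx using h
  obtain ⟨i, hi⟩ := Finite.exists_infinite_fiber idx
  have hi' : (idx ⁻¹' {i}).Infinite := Set.infinite_coe_iff.mp hi
  set e := hi'.natEmbedding with he
  refine ⟨i, fun j => (e j : ℕ), ?_, ?_⟩
  · have hinj : Function.Injective (fun j => ((e j : ℕ))) :=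
      fun a b hab => e.injective (Subtype.ext hab)
    have := hinj.tendsto_cofinite
    rwa [Nat.cofinite_eq_atTop] at this
  · intro j
    have h2 := hidx ((e j : ℕ))
    have h3 : idx ((e j : ℕ)) = i := (e j).2
    rwa [h3] at h2

/-! ### Quadratic expansion on a piece -/

lemma quad_expand (A : X →L[ℝ] X) (hA : ∀ x y : X, (inner ℝ (A x) y : ℝ) = inner ℝ x (A y))
    (a : X) (cst : ℝ) (p h : X) :
    1 / 2 * (inner ℝ (A (p + h)) (p + h) : ℝ) + (inner ℝ a (p + h) : ℝ) + cst
      = (1 / 2 * (inner ℝ (A p) p : ℝ) + (inner ℝ a p : ℝ) + cst)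
        + ((inner ℝ (A p + a) h : ℝ) + 1 / 2 * (inner ℝ (A h) h : ℝ)) := by
  have h1 : (inner ℝ (A (p + h)) (p + h) : ℝ)
      = (inner ℝ (A p) p : ℝ) + (inner ℝ (A p) h : ℝ) + (inner ℝ (A h) p : ℝ) + (inner ℝ (A h) h : ℝ) := by
    rw [map_add, inner_add_left, inner_add_right, inner_add_right]
    ring
  have h2 : (inner ℝ (A h) p : ℝ) = (inner ℝ (A p) h : ℝ) := by
    rw [hA h p, real_inner_comm]
  rw [h1, h2, inner_add_left, inner_add_right]
  ring

lemma quad_bound (A : X →L[ℝ] X) (a : X) (p h : X) {M : ℝ}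
    (hp : ‖p‖ ≤ M) (hh : ‖h‖ ≤ 2 * M) :
    (inner ℝ (A p + a) h : ℝ) + 1 / 2 * (inner ℝ (A h) h : ℝ) ≤ (2 * ‖A‖ * M + ‖a‖) * ‖h‖ := by
  have b1 : (inner ℝ (A p + a) h : ℝ) ≤ ‖A p + a‖ * ‖h‖ :=
    (le_abs_self _).trans (abs_real_inner_le_norm _ _)
  have b2 : (inner ℝ (A h) h : ℝ) ≤ ‖A h‖ * ‖h‖ :=
    (le_abs_self _).trans (abs_real_inner_le_norm _ _)
  have b3 : ‖A p + a‖ ≤ ‖A‖ * M + ‖a‖ := by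
    refine (norm_add_le _ _).trans ?_
    have := A.le_opNorm p
    have hA0 : (0:ℝ) ≤ ‖A‖ := norm_nonneg _
    nlinarith [norm_nonneg p]
  have b4 : ‖A h‖ ≤ ‖A‖ * (2 * M) := (A.le_opNorm h).trans (by
    have hA0 : (0:ℝ) ≤ ‖A‖ := norm_nonneg _
    nlinarith)
  have hh0 : (0:ℝ) ≤ ‖h‖ := norm_nonneg _
  nlinarith

end Stmt10Aux
end Stmt10Aux2
section Stmt10Aux3
open Filter Topology Metric Set
namespace Stmt10Aux
set_option maxHeartbeats 1000000

variable {n m : ℕ}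

lemma f_package {f : Euc n → Euc m} {xb : Euc n} (hf : TwiceDiffAt f xb) :
    ∃ δ : ℝ, 0 < δ ∧ ∃ Cf : ℝ, 0 ≤ Cf ∧ ∃ Lf : ℝ, 0 ≤ Lf ∧
      (∀ x ∈ ball xb δ, DifferentiableAt ℝ f x) ∧
      (∀ x ∈ ball xb δ, ∀ y ∈ ball xb δ, ‖f y - f x‖ ≤ Lf * ‖y - x‖) ∧
      (∀ y ∈ ball xb δ, ‖f y - f xb - fderiv ℝ f xb (y - xb)‖ ≤ Cf * ‖y - xb‖ ^ 2) := by
  obtain ⟨hd, hd2⟩ := hf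
  set g := fderiv ℝ f with hg
  set B := fderiv ℝ g xb with hB
  have hlo : ∀ᶠ x in 𝓝 xb, ‖g x - g xb - B (x - xb)‖ ≤ 1 * ‖x - xb‖ :=
    hd2.hasFDerivAt.isLittleO.bound one_pos
  obtain ⟨δ, hδ, hball⟩ := Metric.eventually_nhds_iff.mp (hd.and hlo)
  set Cf := ‖B‖ + 1 with hCf
  have hCf0 : (0:ℝ) ≤ Cf := by positivity
  have hgb : ∀ x ∈ ball xb δ, ‖g x - g xb‖ ≤ Cf * ‖x - xb‖ := by
    intro x hx
    have h1 := (hball (mem_ball.mp hx)).2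
    calc ‖g x - g xb‖ = ‖(g x - g xb - B (x - xb)) + B (x - xb)‖ := by
          congr 1
          abel
      _ ≤ ‖g x - g xb - B (x - xb)‖ + ‖B (x - xb)‖ := norm_add_le _ _
      _ ≤ 1 * ‖x - xb‖ + ‖B‖ * ‖x - xb‖ := add_le_add h1 (B.le_opNorm _)
      _ = Cf * ‖x - xb‖ := by rw [hCf]; ring
  have hdiff : ∀ x ∈ ball xb δ, DifferentiableAt ℝ f x := fun x hx => (hball (mem_ball.mp hx)).1
  set Lf := ‖g xb‖ + Cf * δ with hLf
  have hLf0 : (0:ℝ) ≤ Lf := by positivity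
  refine ⟨δ, hδ, Cf, hCf0, Lf, hLf0, hdiff, ?_, ?_⟩
  · intro x hx y hy
    refine (convex_ball xb δ).norm_image_sub_le_of_norm_hasFDerivWithin_le
      (fun u hu => ((hdiff u hu).hasFDerivAt.hasFDerivWithinAt)) (fun u hu => ?_) hx hy
    calc ‖g u‖ = ‖g xb + (g u - g xb)‖ := by
          congr 1
          abel
      _ ≤ ‖g xb‖ + ‖g u - g xb‖ := norm_add_le _ _
      _ ≤ ‖g xb‖ + Cf * ‖u - xb‖ := by
          have := hgb u hu
          linarith
      _ ≤ Lf := by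
          have hu' : ‖u - xb‖ ≤ δ := by
            have := mem_ball.mp hu
            rw [dist_eq_norm] at this
            linarith
          nlinarith
  · intro y hy
    have hyδ : ‖y - xb‖ < δ := by
      have := mem_ball.mp hy
      rwa [dist_eq_norm] at this
    have hsub : closedBall xb ‖y - xb‖ ⊆ ball xb δ := closedBall_subset_ball hyδ
    have key := (convex_closedBall xb ‖y - xb‖).norm_image_sub_le_of_norm_hasFDerivWithin_le'
      (f' := g) (φ := g xb) (C := Cf * ‖y - xb‖) (x := xb) (y := y)
      (fun u hu => ((hdiff u (hsub hu)).hasFDerivAt.hasFDerivWithinAt))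
      (fun u hu => by
        have h1 := hgb u (hsub hu)
        have h2 : ‖u - xb‖ ≤ ‖y - xb‖ := by
          have := mem_closedBall.mp hu
          rwa [dist_eq_norm] at this
        nlinarith)
      (mem_closedBall_self (norm_nonneg _))
      (by simp [mem_closedBall, dist_eq_norm])
    calc ‖f y - f xb - g xb (y - xb)‖ ≤ Cf * ‖y - xb‖ * ‖y - xb‖ := key
      _ = Cf * ‖y - xb‖ ^ 2 := by ring

lemma deriv_dir {f : Euc n → Euc m} {x : Euc n} (hx : DifferentiableAt ℝ f x) (d : Euc n) :
    Tendsto (fun t : ℝ => t⁻¹ • (f (x + t • d) - f x)) (𝓝[>] (0:ℝ))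
      (𝓝 (fderiv ℝ f x d)) := by
  have hc : HasDerivAt (fun t : ℝ => x + t • d) d 0 := by
    simpa using ((hasDerivAt_id (0:ℝ)).smul_const d).const_add x
  have h2 : HasDerivAt (fun t : ℝ => f (x + t • d)) (fderiv ℝ f x d) 0 := by
    have hx0 : HasFDerivAt f (fderiv ℝ f x) (x + (0:ℝ) • d) := by simpa using hx.hasFDerivAt
    exact hx0.comp_hasDerivAt (0:ℝ) hc
  have h3 := hasDerivAt_iff_tendsto_slope.mp h2
  have h4 : Tendsto (slope (fun t : ℝ => f (x + t • d)) 0) (𝓝[>] (0:ℝ))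
      (𝓝 (fderiv ℝ f x d)) :=
    h3.mono_left (nhdsWithin_mono 0 (fun t ht => ne_of_gt ht))
  refine h4.congr' ?_
  filter_upwards [self_mem_nhdsWithin] with t ht
  rw [slope_def_module]
  simp
end Stmt10Aux
end Stmt10Aux3
section Stmt10Aux4
open Filter Topology Metric Set
namespace Stmt10Aux
set_option maxHeartbeats 1000000

variable {n m : ℕ}

lemma eta_quot {f : Euc n → Euc m} {x : Euc n} (hx : DifferentiableAt ℝ f x) (y : Euc n) :
    Tendsto (fun t : ℝ => t⁻¹ * ‖f (x + t • (y - x)) - (f x + t • (f y - f x))‖)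
      (𝓝[>] (0:ℝ)) (𝓝 ‖fderiv ℝ f x (y - x) - (f y - f x)‖) := by
  have h2 := ((deriv_dir hx (y - x)).sub_const (f y - f x)).norm
  refine Tendsto.congr' ?_ h2
  filter_upwards [self_mem_nhdsWithin] with t ht
  have ht0 : t ≠ 0 := ne_of_gt ht
  have e1 : t⁻¹ • (f (x + t • (y - x)) - (f x + t • (f y - f x)))
      = t⁻¹ • (f (x + t • (y - x)) - f x) - (f y - f x) := by
    rw [show f (x + t • (y - x)) - (f x + t • (f y - f x))
        = (f (x + t • (y - x)) - f x) - t • (f y - f x) by abel,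
      smul_sub, smul_smul, inv_mul_cancel₀ ht0, one_smul]
  rw [← e1, norm_smul, Real.norm_eq_abs, abs_of_pos (inv_pos.mpr ht)]

/-- Local Lipschitz continuity of a convex PLQ function relative to its domain. -/
lemma plq_lip {ϑ : Euc m → EReal} (R : PLQRepr ϑ)
    (hconv : ERealConvexOn ϑ) (hbot : ∀ y, ϑ y ≠ ⊥) (c : Euc m) (ρ : ℝ) :
    ∃ ℓ : ℝ, 0 ≤ ℓ ∧ ∀ y ∈ edom ϑ ∩ closedBall c ρ, ∀ z ∈ edom ϑ ∩ closedBall c ρ,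
      (ϑ y).toReal ≤ (ϑ z).toReal + ℓ * ‖y - z‖ := by
  set M := ‖c‖ + |ρ| with hM
  have hM0 : (0:ℝ) ≤ M := by positivity
  set ℓ := ∑ i : Fin R.s, (2 * ‖R.A i‖ * M + ‖R.a i‖) with hℓ
  have hbound : ∀ i, 2 * ‖R.A i‖ * M + ‖R.a i‖ ≤ ℓ := fun i =>
    Finset.single_le_sum (f := fun i => 2 * ‖R.A i‖ * M + ‖R.a i‖)
      (fun j _ => by positivity) (Finset.mem_univ i)
  have hℓ0 : (0:ℝ) ≤ ℓ := Finset.sum_nonneg (fun j _ => by positivity)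
  refine ⟨ℓ, hℓ0, ?_⟩
  rintro y ⟨hy, hyb⟩ z ⟨hz, hzb⟩
  have hy' : ϑ y ≠ ⊤ := hy
  have hz' : ϑ z ≠ ⊤ := hz
  have hnorm : ∀ u : Euc m, u ∈ closedBall c ρ → ‖u‖ ≤ M := by
    intro u hu
    have h1 : ‖u - c‖ ≤ ρ := by rw [← dist_eq_norm]; exact mem_closedBall.mp hu
    have h2 := le_abs_self ρ
    calc ‖u‖ = ‖(u - c) + c‖ := by congr 1; abel
      _ ≤ ‖u - c‖ + ‖c‖ := norm_add_le _ _
      _ ≤ M := by rw [hM]; linarith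
  -- the midpoints
  set ε : ℕ → ℝ := fun k => 1 / (k + 2) with hε
  have hε0 : ∀ k, 0 < ε k := fun k => by positivity
  have hε1 : ∀ k, ε k ≤ 1 / 2 := by
    intro k
    rw [hε]
    apply div_le_div_of_nonneg_left one_pos.le two_pos
    · exact_mod_cast by linarith [Nat.zero_le k]
  set mid : ℕ → Euc m := fun k => (1 - ε k) • y + (1 - (1 - ε k)) • z with hmid
  have hmid_eq : ∀ k, mid k = y + (ε k) • (z - y) := by
    intro k
    rw [hmid]
    simp only
    rw [sub_smul, sub_smul, one_smul, sub_smul, one_smul, smul_sub]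
    abel
  have hεt : Tendsto ε atTop (𝓝 0) := by
    refine squeeze_zero (fun k => (hε0 k).le) (fun k => ?_) tendsto_one_div_add_atTop_nhds_zero_nat
    rw [hε]
    apply div_le_div_of_nonneg_left one_pos.le (by positivity)
    exact_mod_cast by linarith [Nat.zero_le k]
  have hmidt : Tendsto mid atTop (𝓝 y) := by
    have h1 : Tendsto (fun k => y + (ε k) • (z - y)) atTop (𝓝 (y + (0:ℝ) • (z - y))) :=
      tendsto_const_nhds.add (hεt.smul_const (z - y))
    rw [funext hmid_eq]
    simpa using h1
  have hCk : ∀ k, ϑ (mid k) ≠ ⊤ ∧ (ϑ (mid k)).toReal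
      ≤ (1 - ε k) * (ϑ y).toReal + (1 - (1 - ε k)) * (ϑ z).toReal := fun k =>
    convex_pt hconv hbot hy' hz' (by linarith [hε1 k, hε0 k]) (by linarith [hε0 k])
  have hPk : ∀ k, ∃ i, mid k ∈ R.piece i := by
    intro k
    have hd : mid k ∈ edom ϑ := (hCk k).1
    rw [R.dom_eq] at hd
    exact Set.mem_iUnion.mp hd
  obtain ⟨i, σ, hσ, hσmem⟩ := exists_subseq_mem hPk
  have hyP : y ∈ R.piece i :=
    (poly_isClosed (R.poly i)).mem_of_tendsto (hmidt.comp hσ) (Filter.Eventually.of_forall hσmem)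
  set k0 := σ 0 with hk0
  set τ := ε k0 with hτ
  have hτ0 : 0 < τ := hε0 k0
  have hτ1 : τ ≤ 1 / 2 := hε1 k0
  have hmidP : mid k0 ∈ R.piece i := hσmem 0
  -- real values on the piece
  have hvy : (ϑ y).toReal
      = 1 / 2 * (inner ℝ (R.A i y) y : ℝ) + (inner ℝ (R.a i) y : ℝ) + R.cst i := by
    rw [R.val i y hyP]; exact EReal.toReal_coe _
  have hvmid : (ϑ (mid k0)).toReal
      = 1 / 2 * (inner ℝ (R.A i (mid k0)) (mid k0) : ℝ) + (inner ℝ (R.a i) (mid k0) : ℝ) + R.cst i := by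
    rw [R.val i (mid k0) hmidP]; exact EReal.toReal_coe _
  have hQ := quad_expand (R.A i) (R.symm i) (R.a i) (R.cst i) (mid k0) (y - mid k0)
  rw [show mid k0 + (y - mid k0) = y by abel] at hQ
  have hmidb : mid k0 ∈ closedBall c ρ :=
    (convex_closedBall c ρ) hyb hzb (by linarith) (by simp; linarith) (by ring)
  have hy_mid : y - mid k0 = τ • (y - z) := by
    rw [hmid_eq k0, smul_sub, smul_sub]
    abel
  have hnywmid : ‖y - mid k0‖ = τ * ‖y - z‖ := by
    rw [hy_mid, norm_smul, Real.norm_eq_abs, abs_of_pos hτ0]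
  have hyz2M : ‖y - z‖ ≤ 2 * M := by
    have := norm_sub_le y z
    have h1 := hnorm y hyb
    have h2 := hnorm z hzb
    linarith
  have hIb := quad_bound (R.A i) (R.a i) (mid k0) (y - mid k0) (hnorm _ hmidb)
    (by rw [hnywmid]; nlinarith)
  have hIb2 : (inner ℝ (R.A i (mid k0) + R.a i) (y - mid k0) : ℝ)
      + 1 / 2 * (inner ℝ (R.A i (y - mid k0)) (y - mid k0) : ℝ) ≤ ℓ * (τ * ‖y - z‖) := by
    refine hIb.trans ?_
    rw [hnywmid]
    have h1 := hbound i
    have h2 : (0:ℝ) ≤ τ * ‖y - z‖ := by positivity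
    nlinarith
  have hcvx := (hCk k0).2
  have hval : (ϑ y).toReal = (ϑ (mid k0)).toReal
      + ((inner ℝ (R.A i (mid k0) + R.a i) (y - mid k0) : ℝ)
        + 1 / 2 * (inner ℝ (R.A i (y - mid k0)) (y - mid k0) : ℝ)) := by
    rw [hvy, hvmid]
    exact hQ
  have hd0 : (0:ℝ) ≤ ‖y - z‖ := norm_nonneg _
  nlinarith [hval, hcvx, hIb2]
end Stmt10Aux
end Stmt10Aux4
section Stmt10Aux5
open Filter Topology Metric Set
namespace Stmt10Aux
set_option maxHeartbeats 1000000

variable {X : Type*} [NormedAddCommGroup X] [InnerProductSpace ℝ X]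

lemma prox_subset_frechet (φ : X → EReal) (x : X) :
    proxSubdiff φ x ⊆ frechetSubdiff φ x := by
  rintro v ⟨r, hr, γ, hγ, H⟩ ε hε
  have hball : Metric.ball x (min γ (2 * ε / r)) ∈ 𝓝 x := ball_mem_nhds _ (by positivity)
  filter_upwards [hball] with y hy
  have h1 : y ∈ ball x γ := mem_ball.mpr ((mem_ball.mp hy).trans_le (min_le_left _ _))
  refine le_trans ?_ (H y h1)
  apply add_le_add (le_refl _)
  rw [EReal.coe_le_coe_iff]
  have hd : ‖y - x‖ < 2 * ε / r := by
    have h2 := mem_ball.mp hy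
    rw [dist_eq_norm] at h2
    exact lt_of_lt_of_le h2 (min_le_right _ _)
  have hd2 : ‖y - x‖ * r < 2 * ε := (lt_div_iff₀ hr).mp hd
  have h3 : r / 2 * ‖y - x‖ ^ 2 ≤ ε * ‖y - x‖ := by nlinarith [norm_nonneg (y - x)]
  linarith

lemma frechet_subset_lim (φ : X → EReal) (x : X) :
    frechetSubdiff φ x ⊆ limSubdiff φ x :=
  fun v hv => ⟨fun _ => x, fun _ => v, tendsto_const_nhds, tendsto_const_nhds,
    tendsto_const_nhds, fun _ => hv⟩

lemma ereal_le_of_forall_eps {a : EReal} {L : ℝ} (h : ∀ ε : ℝ, 0 < ε → a ≤ ((L + ε : ℝ) : EReal)) :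
    a ≤ (L : EReal) := by
  by_contra hc
  push_neg at hc
  obtain ⟨z, hz1, hz2⟩ := EReal.exists_between_coe_real hc
  have := h (z - L) (by exact_mod_cast (by linarith [EReal.coe_lt_coe_iff.mp hz1] : 0 < z - L))
  rw [show L + (z - L) = z by ring] at this
  exact absurd (lt_of_le_of_lt this hz2) (lt_irrefl _)

lemma exists_real_gt' {a : EReal} (h : a ≠ ⊤) : ∃ M : ℝ, a < (M : EReal) := by
  induction a using EReal.rec with
  | bot => exact ⟨0, bot_lt_iff_ne_bot.mpr (by simp)⟩
  | coe x => exact ⟨x + 1, by exact_mod_cast lt_add_one x⟩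
  | top => exact absurd rfl h

/-- The proximal inequality forces the subderivative to dominate the linearization. -/
lemma subderiv_ge_of_prox {φ : X → EReal} {x v : X}
    (hx : φ x ≠ ⊤) (hxb : φ x ≠ ⊥) (hbot : ∀ y, φ y ≠ ⊥)
    (hv : v ∈ proxSubdiff φ x) (w : X) :
    ((inner ℝ v w : ℝ) : EReal) ≤ subderiv φ x w := by
  obtain ⟨r, hr, γ, hγ, H⟩ := hv
  haveI := neBotF w
  unfold subderiv
  have hcont : Tendsto (fun p : ℝ × X => (inner ℝ v p.2 : ℝ) - r / 2 * p.1 * ‖p.2‖ ^ 2)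
      ((𝓝[>] (0:ℝ)) ×ˢ 𝓝 w) (𝓝 ((inner ℝ v w : ℝ))) := by
    have hc : Continuous (fun p : ℝ × X => (inner ℝ v p.2 : ℝ) - r / 2 * p.1 * ‖p.2‖ ^ 2) :=
      (continuous_const.inner continuous_snd).sub
        ((continuous_const.mul continuous_fst).mul ((continuous_snd.norm).pow 2))
    have h2 : ((𝓝[>] (0:ℝ)) ×ˢ 𝓝 w) ≤ 𝓝 ((0:ℝ), w) := by
      rw [nhds_prod_eq]
      exact Filter.prod_mono nhdsWithin_le_nhds le_rfl
    have h3 := (hc.tendsto ((0:ℝ), w)).mono_left h2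
    simpa using h3
  refine le_liminf_of_coe ?_ hcont
  have hev : ∀ᶠ p : ℝ × X in (𝓝[>] (0:ℝ)) ×ˢ 𝓝 w,
      p.1 ∈ Ioo (0:ℝ) (γ / (‖w‖ + 1)) ∧ p.2 ∈ ball w 1 :=
    Filter.prod_mem_prod (Ioo_mem_nhdsGT_of_mem ⟨le_refl _, by positivity⟩)
      (ball_mem_nhds _ one_pos)
  filter_upwards [hev] with p hp
  obtain ⟨⟨ht0, ht1⟩, hu⟩ := hp
  set t := p.1
  set u := p.2
  have hun : ‖u‖ < ‖w‖ + 1 := by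
    have := mem_ball.mp hu
    rw [dist_eq_norm] at this
    have h4 := norm_sub_norm_le u w
    linarith
  have hmem : x + t • u ∈ ball x γ := by
    rw [mem_ball, dist_eq_norm]
    have h5 : ‖x + t • u - x‖ = t * ‖u‖ := by
      rw [show x + t • u - x = t • u by abel, norm_smul, Real.norm_eq_abs, abs_of_pos ht0]
    rw [h5]
    calc t * ‖u‖ ≤ t * (‖w‖ + 1) := by nlinarith
      _ < γ / (‖w‖ + 1) * (‖w‖ + 1) := by
          have h6 : (0:ℝ) < ‖w‖ + 1 := by positivity
          exact mul_lt_mul_of_pos_right ht1 h6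
      _ = γ := by field_simp
  have H2 := H (x + t • u) hmem
  rw [show x + t • u - x = t • u by abel] at H2
  by_cases htop : φ (x + t • u) = ⊤
  · rw [subQuot_top ht0 htop hx hxb]
    exact le_top
  · rw [subQuot_coe htop (hbot _) hx hxb, EReal.coe_le_coe_iff]
    rw [ereal_eq_coe hx hxb, ereal_eq_coe htop (hbot _), ← EReal.coe_add,
      EReal.coe_le_coe_iff] at H2
    have h7 : (inner ℝ v (t • u) : ℝ) = t * (inner ℝ v u : ℝ) := real_inner_smul_right v u t
    rw [h7] at H2
    have h8 : ‖t • u‖ ^ 2 = t ^ 2 * ‖u‖ ^ 2 := by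
      rw [norm_smul, Real.norm_eq_abs, abs_of_pos ht0]
      ring
    rw [h8] at H2
    have h9 : (φ x).toReal + (t * (inner ℝ v u : ℝ) - r / 2 * (t ^ 2 * ‖u‖ ^ 2))
        ≤ (φ (x + t • u)).toReal := H2
    have ht0' : (0:ℝ) < t⁻¹ := inv_pos.mpr ht0
    rw [← sub_nonneg]
    have h10 : t⁻¹ * ((φ (x + t • u)).toReal - (φ x).toReal)
        - ((inner ℝ v u : ℝ) - r / 2 * t * ‖u‖ ^ 2)
        = t⁻¹ * (((φ (x + t • u)).toReal - (φ x).toReal)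
          - (t * (inner ℝ v u : ℝ) - r / 2 * (t ^ 2 * ‖u‖ ^ 2))) := by
      field_simp
    rw [h10]
    have h11 : (0:ℝ) ≤ ((φ (x + t • u)).toReal - (φ x).toReal)
        - (t * (inner ℝ v u : ℝ) - r / 2 * (t ^ 2 * ‖u‖ ^ 2)) := by linarith
    positivity
end Stmt10Aux
end Stmt10Aux5
section Stmt10Aux6
open Filter Topology Metric Set
namespace Stmt10Aux
set_option maxHeartbeats 1000000

variable {X : Type*} [NormedAddCommGroup X] [InnerProductSpace ℝ X]

lemma subderiv_le_seq {φ : X → EReal} {x w : X} (hx : φ x ≠ ⊤) (hxb : φ x ≠ ⊥)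
    (hbot : ∀ y, φ y ≠ ⊥)
    {t : ℕ → ℝ} {u : ℕ → X} (ht0 : ∀ k, 0 < t k) (ht : Tendsto t atTop (𝓝 0))
    (hu : Tendsto u atTop (𝓝 w))
    (hn : ∀ k, φ (x + t k • u k) ≠ ⊤)
    {b : ℕ → ℝ} {L : ℝ}
    (hb : ∀ k, (t k)⁻¹ * ((φ (x + t k • u k)).toReal - (φ x).toReal) ≤ b k)
    (hbt : Tendsto b atTop (𝓝 L)) : subderiv φ x w ≤ (L : EReal) := by
  apply ereal_le_of_forall_eps
  intro ε hε
  have hev : ∀ᶠ k in atTop, b k < L + ε :=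
    Filter.Tendsto.eventually_lt_const (by linarith) hbt
  unfold subderiv
  refine Filter.liminf_le_of_frequently_le ?_
  refine (tendsto_pair ht0 ht hu).frequently ?_
  refine hev.frequently.mono ?_
  intro k hk
  rw [subQuot_coe (hn k) (hbot _) hx hxb]
  exact EReal.coe_le_coe_iff.mpr (by linarith [hb k])

/-- Finiteness of the second subderivative puts `w` in the critical cone. -/
lemma dom2_subset_crit {n m : ℕ} {f : Euc n → Euc m} {ϑ : Euc m → EReal} {xb : Euc n}
    {vb : Euc n}
    (hbot : ∀ y, ϑ y ≠ ⊥) (hdom : ϑ (f xb) ≠ ⊤)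
    (hprox : vb ∈ proxSubdiff (fun x => ϑ (f x)) xb) {w : Euc n}
    (hne : secondSubderiv (fun x => ϑ (f x)) xb vb w ≠ ⊤) :
    w ∈ critCone (fun x => ϑ (f x)) xb vb := by
  set φ : Euc n → EReal := fun x => ϑ (f x) with hφ
  have hbot' : ∀ y, φ y ≠ ⊥ := fun y => hbot _
  have hxb : φ xb ≠ ⊥ := hbot _
  have hx : φ xb ≠ ⊤ := hdom
  obtain ⟨M, hM⟩ := exists_real_gt' hne
  unfold secondSubderiv at hM
  have hfreq : ∀ j : ℕ, ∃ᶠ p in (𝓝[>] (0:ℝ)) ×ˢ 𝓝 w, quadDiff φ xb vb p.1 p.2 < (M : EReal) :=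
    fun _ => Filter.frequently_lt_of_liminf_lt (h := hM)
  obtain ⟨t, u, ht0, ht, hu, hQ⟩ :=
    exists_seq_of_frequently (Q := fun _ p => quadDiff φ xb vb p.1 p.2 < (M : EReal)) hfreq
  have hn : ∀ k, φ (xb + t k • u k) ≠ ⊤ := by
    intro k hT
    have h1 := hQ k
    rw [quadDiff_top (ne_of_gt (ht0 k)) hT hx hxb] at h1
    exact absurd h1 not_top_lt
  have hb : ∀ k, (t k)⁻¹ * ((φ (xb + t k • u k)).toReal - (φ xb).toReal)
      ≤ (inner ℝ vb (u k) : ℝ) + M * t k / 2 := by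
    intro k
    have h1 := hQ k
    rw [quadDiff_coe (hn k) (hbot' _) hx hxb] at h1
    have h2 : 2 / t k ^ 2 * ((φ (xb + t k • u k)).toReal - (φ xb).toReal
        - t k * (inner ℝ vb (u k) : ℝ)) < M := by exact_mod_cast h1
    have ht2 : (0:ℝ) < t k := ht0 k
    set Y : ℝ := (φ (xb + t k • u k)).toReal - (φ xb).toReal - t k * (inner ℝ vb (u k) : ℝ)
      with hY
    have h3 : Y = (2 / t k ^ 2 * Y) * (t k ^ 2 / 2) := by field_simp
    have h4 : Y ≤ M * (t k ^ 2 / 2) := by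
      rw [h3]
      exact le_of_lt (mul_lt_mul_of_pos_right h2 (by positivity))
    have key : (φ (xb + t k • u k)).toReal - (φ xb).toReal
        - (t k * (inner ℝ vb (u k) : ℝ) + M * t k ^ 2 / 2) ≤ 0 := by
      rw [hY] at h4
      linarith
    rw [← sub_nonpos]
    have h5 : (t k)⁻¹ * ((φ (xb + t k • u k)).toReal - (φ xb).toReal)
        - ((inner ℝ vb (u k) : ℝ) + M * t k / 2)
        = (t k)⁻¹ * ((φ (xb + t k • u k)).toReal - (φ xb).toReal
          - (t k * (inner ℝ vb (u k) : ℝ) + M * t k ^ 2 / 2)) := by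
      field_simp
    rw [h5]
    exact mul_nonpos_of_nonneg_of_nonpos (inv_pos.mpr ht2).le key
  have hb1 : Tendsto (fun k => (inner ℝ vb (u k) : ℝ)) atTop (𝓝 ((inner ℝ vb w : ℝ))) :=
    ((continuous_const.inner continuous_id).tendsto w).comp hu
  have hb2 : Tendsto (fun k => M * t k / 2) atTop (𝓝 0) := by
    have := (ht.const_mul M).div_const 2
    simpa using this
  have hbt : Tendsto (fun k => (inner ℝ vb (u k) : ℝ) + M * t k / 2) atTop
      (𝓝 ((inner ℝ vb w : ℝ))) := by
    have := hb1.add hb2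
    simpa using this
  have hle : subderiv φ xb w ≤ (((inner ℝ vb w : ℝ)) : EReal) :=
    subderiv_le_seq hx hxb hbot' ht0 ht hu hn hb hbt
  have hge := subderiv_ge_of_prox hx hxb hbot' hprox w
  exact le_antisymm hle hge
end Stmt10Aux
end Stmt10Aux6
section Stmt10Aux7
open Filter Topology Metric Set
namespace Stmt10Aux
set_option maxHeartbeats 4000000

variable {n m : ℕ}

/-- Key per-point estimate: a Fréchet subgradient at a point near `xb` satisfies a
quantitative lower estimate with error controlled by the linearization defect of `f`. -/
lemma lim_subset_prox {f : Euc n → Euc m} {ϑ : Euc m → EReal} {xb : Euc n}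
    (hf : TwiceDiffAt f xb) (hbot : ∀ y, ϑ y ≠ ⊥) (R : PLQRepr ϑ)
    (hconv : ERealConvexOn ϑ) (hdom : ϑ (f xb) ≠ ⊤)
    {κ : ℝ} (hmsqc : MSQCAt f (edom ϑ) xb κ) :
    limSubdiff (fun x => ϑ (f x)) xb ⊆ proxSubdiff (fun x => ϑ (f x)) xb := by
  classical
  set φ : Euc n → EReal := fun x => ϑ (f x) with hφdef
  have hbot' : ∀ x, φ x ≠ ⊥ := fun x => hbot _
  set D : Set (Euc m) := edom ϑ with hD
  have hDconv : Convex ℝ D := edom_convex hconv hbot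
  have hxbD : f xb ∈ D := hdom
  obtain ⟨δf, hδf, Cf, hCf, Lf, hLf, hdiff, hlip, hquad⟩ := f_package hf
  obtain ⟨ℓ, hℓ0, hLIP⟩ := plq_lip R hconv hbot (f xb) 1
  have hκ0 : 0 ≤ κ := hmsqc.1
  have hfc : ContinuousAt f xb := (hdiff xb (mem_ball_self hδf)).continuousAt
  have hev : ∀ᶠ x in 𝓝 xb,
      (Metric.infDist x (f ⁻¹' D) ≤ κ * Metric.infDist (f x) D) ∧ f x ∈ ball (f xb) 1 :=
    hmsqc.2.and (hfc.eventually_mem (ball_mem_nhds _ one_pos))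
  obtain ⟨δm, hδm, hevm⟩ := Metric.eventually_nhds_iff.mp hev
  set δ3 : ℝ := min δf δm with hδ3def
  have hδ3 : 0 < δ3 := lt_min hδf hδm
  have hδ3f : δ3 ≤ δf := min_le_left _ _
  have hδ3m : δ3 ≤ δm := min_le_right _ _
  set δ2 : ℝ := δ3 / 2 with hδ2def
  have hδ2 : 0 < δ2 := by positivity
  have hball3 : ∀ x : Euc n, dist x xb < δ3 →
      (Metric.infDist x (f ⁻¹' D) ≤ κ * Metric.infDist (f x) D) ∧ f x ∈ ball (f xb) 1 :=
    fun x hx => hevm (lt_of_lt_of_le hx hδ3m)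
  have hb3f : ball xb δ3 ⊆ ball xb δf := ball_subset_ball hδ3f
  have hb23 : ball xb δ2 ⊆ ball xb δ3 := ball_subset_ball (by linarith)
  clear_value δ3 δ2
  -- KEY PER-POINT ESTIMATE
  have key : ∀ x ∈ ball xb δ2, ∀ v : Euc n, v ∈ frechetSubdiff φ x → φ x ≠ ⊤ →
      ∀ y ∈ ball xb δ2, φ y ≠ ⊤ →
      (φ x).toReal + (inner ℝ v (y - x) : ℝ)
        - (ℓ * (Lf * κ + 1) + ‖v‖ * κ) * ‖fderiv ℝ f x (y - x) - (f y - f x)‖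
        ≤ (φ y).toReal := by
    intro x hx2 v hvF hxT y hy2 hyT
    by_cases hxy : y = x
    · subst hxy
      simp
    set E : ℝ := ‖fderiv ℝ f x (y - x) - (f y - f x)‖ with hEdef
    have hE0 : 0 ≤ E := norm_nonneg _
    have hyx0 : 0 < ‖y - x‖ := by
      rw [norm_pos_iff]
      exact sub_ne_zero_of_ne hxy
    refine ge_sub_of_forall_pos (c := κ * E + ‖y - x‖) (by positivity) ?_
    intro ε hε
    -- the Fréchet neighborhood
    obtain ⟨γε, hγε, hFre⟩ := Metric.eventually_nhds_iff.mp (hvF ε hε)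
    set Kxy : ℝ := ‖y - x‖ + 2 * κ * Lf * ‖y - x‖ + 1 with hKdef
    have hK0 : 0 < Kxy := by positivity
    set t0 : ℝ := min 1 (min γε (δ3 / 2) / Kxy) with ht0def
    have ht00 : 0 < t0 := lt_min one_pos (div_pos (lt_min hγε (by positivity)) hK0)
    set tj : ℕ → ℝ := fun j => t0 / (j + 2) with htjdef
    have htj0 : ∀ j, 0 < tj j := fun j => by positivity
    have htj1 : ∀ j, tj j ≤ 1 := by
      intro j
      have h1 : tj j ≤ t0 / 2 := by
        rw [htjdef]
        apply div_le_div_of_nonneg_left ht00.le two_pos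
        exact_mod_cast by linarith [Nat.zero_le j]
      have h2 : t0 ≤ 1 := min_le_left _ _
      linarith
    have htjK : ∀ j, tj j * Kxy < min γε (δ3 / 2) := by
      intro j
      have h1 : tj j ≤ t0 / 2 := by
        rw [htjdef]
        apply div_le_div_of_nonneg_left ht00.le two_pos
        exact_mod_cast by linarith [Nat.zero_le j]
      have h2 : t0 * Kxy ≤ min γε (δ3 / 2) := by
        have h3 : t0 ≤ min γε (δ3 / 2) / Kxy := min_le_right _ _
        calc t0 * Kxy ≤ (min γε (δ3 / 2) / Kxy) * Kxy := by nlinarith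
          _ = min γε (δ3 / 2) := by field_simp
      have hmin0 : 0 < min γε (δ3 / 2) := lt_min hγε (by positivity)
      nlinarith
    have htjt : Tendsto tj atTop (𝓝 0) := by
      have h1 : Tendsto (fun j : ℕ => t0 * (1 / (j + 1))) atTop (𝓝 (t0 * 0)) :=
        tendsto_const_nhds.mul tendsto_one_div_add_atTop_nhds_zero_nat
      rw [mul_zero] at h1
      refine squeeze_zero (fun j => (htj0 j).le) (fun j => ?_) h1
      rw [htjdef, mul_one_div]
      apply div_le_div_of_nonneg_left ht00.le (by positivity)
      exact_mod_cast by linarith [Nat.zero_le j]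
    clear_value t0 tj
    -- geometric points
    set mp : ℕ → Euc n := fun j => x + tj j • (y - x) with hmpdef
    set cp : ℕ → Euc m := fun j => f x + tj j • (f y - f x) with hcpdef
    set η : ℕ → ℝ := fun j => ‖f (mp j) - cp j‖ with hηdef
    have hη0 : ∀ j, 0 ≤ η j := fun j => norm_nonneg _
    have hx3 : x ∈ ball xb δ3 := hb23 hx2
    have hy3 : y ∈ ball xb δ3 := hb23 hy2
    have hxf : x ∈ ball xb δf := hb3f hx3
    have hyf : y ∈ ball xb δf := hb3f hy3
    have hfxD : f x ∈ D := hxT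
    have hfyD : f y ∈ D := hyT
    have hmp3 : ∀ j, mp j ∈ ball xb δ3 := by
      intro j
      have h1 := (convex_ball xb δ3) hx3 hy3 (a := 1 - tj j) (b := 1 - (1 - tj j))
        (by linarith [htj1 j]) (by linarith [(htj0 j).le]) (by ring)
      rwa [comb_eq (tj j) x y] at h1
    have hmpf : ∀ j, mp j ∈ ball xb δf := fun j => hb3f (hmp3 j)
    have hcpD : ∀ j, cp j ∈ D := by
      intro j
      have h1 := hDconv hfxD hfyD (a := 1 - tj j) (b := 1 - (1 - tj j))
        (by linarith [htj1 j]) (by linarith [(htj0 j).le]) (by ring)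
      rwa [comb_eq (tj j) (f x) (f y)] at h1
    have hfx1 : f x ∈ ball (f xb) 1 := (hball3 x (mem_ball.mp hx3)).2
    have hfy1 : f y ∈ ball (f xb) 1 := (hball3 y (mem_ball.mp hy3)).2
    have hcp1 : ∀ j, cp j ∈ ball (f xb) 1 := by
      intro j
      have h1 := (convex_ball (f xb) 1) hfx1 hfy1 (a := 1 - tj j) (b := 1 - (1 - tj j))
        (by linarith [htj1 j]) (by linarith [(htj0 j).le]) (by ring)
      rwa [comb_eq (tj j) (f x) (f y)] at h1
    -- eta bound
    have hηb : ∀ j, η j ≤ 2 * Lf * (tj j * ‖y - x‖) := by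
      intro j
      have h1 : ‖f (mp j) - f x‖ ≤ Lf * (tj j * ‖y - x‖) := by
        have h2 := hlip x hxf (mp j) (hmpf j)
        have h3 : ‖mp j - x‖ = tj j * ‖y - x‖ := by
          rw [hmpdef]
          simp only
          rw [show x + tj j • (y - x) - x = tj j • (y - x) by abel, norm_smul,
            Real.norm_eq_abs, abs_of_pos (htj0 j)]
        rwa [h3] at h2
      have h4 : ‖tj j • (f y - f x)‖ ≤ tj j * (Lf * ‖y - x‖) := by
        rw [norm_smul, Real.norm_eq_abs, abs_of_pos (htj0 j)]
        have h5 := hlip x hxf y hyf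
        nlinarith [(htj0 j).le]
      have h6 : η j ≤ ‖f (mp j) - f x‖ + ‖tj j • (f y - f x)‖ := by
        rw [hηdef]
        simp only
        rw [hcpdef]
        simp only
        rw [show f (mp j) - (f x + tj j • (f y - f x))
          = (f (mp j) - f x) - tj j • (f y - f x) by abel]
        exact norm_sub_le _ _
      nlinarith [(htj0 j).le]
    -- metric subregularity and selection
    have hzex : ∀ j, ∃ z : Euc n, z ∈ f ⁻¹' D ∧ dist (mp j) z < κ * η j + (tj j) ^ 2 := by
      intro j
      have h1 : Metric.infDist (f (mp j)) D ≤ η j := by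
        have := Metric.infDist_le_dist_of_mem (x := f (mp j)) (hcpD j)
        rwa [dist_eq_norm] at this
      have h2 := (hball3 (mp j) (mem_ball.mp (hmp3 j))).1
      have h3 : Metric.infDist (mp j) (f ⁻¹' D) < κ * η j + (tj j) ^ 2 := by
        have h4 : κ * Metric.infDist (f (mp j)) D ≤ κ * η j :=
          mul_le_mul_of_nonneg_left h1 hκ0
        have h5 : (0:ℝ) < (tj j) ^ 2 := pow_pos (htj0 j) 2
        linarith
      exact (Metric.infDist_lt_iff ⟨xb, hxbD⟩).mp h3
    choose z hzD hzd using hzex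
    have hzm : ∀ j, ‖z j - mp j‖ ≤ κ * η j + (tj j) ^ 2 := by
      intro j
      have := hzd j
      rw [dist_comm, dist_eq_norm] at this
      exact this.le
    have hzx : ∀ j, ‖z j - x‖ ≤ tj j * Kxy := by
      intro j
      have h1 : ‖z j - x‖ ≤ ‖z j - mp j‖ + ‖mp j - x‖ := by
        have := norm_add_le (z j - mp j) (mp j - x)
        rwa [show z j - mp j + (mp j - x) = z j - x by abel] at this
      have h2 : ‖mp j - x‖ = tj j * ‖y - x‖ := by
        rw [hmpdef]
        simp only
        rw [show x + tj j • (y - x) - x = tj j • (y - x) by abel, norm_smul,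
          Real.norm_eq_abs, abs_of_pos (htj0 j)]
      have h3 := hzm j
      have h4 := hηb j
      have h5 := htj0 j
      have h6 := htj1 j
      rw [hKdef]
      nlinarith [norm_nonneg (y - x)]
    clear_value Kxy
    have hzγ : ∀ j, z j ∈ ball x γε := by
      intro j
      rw [mem_ball, dist_eq_norm]
      have h1 := hzx j
      have h2 := htjK j
      have h3 : min γε (δ3 / 2) ≤ γε := min_le_left _ _
      linarith
    have hz3 : ∀ j, z j ∈ ball xb δ3 := by
      intro j
      rw [mem_ball]
      have h1 : dist (z j) xb ≤ dist (z j) x + dist x xb := dist_triangle _ _ _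
      have h2 : dist (z j) x ≤ tj j * Kxy := by rw [dist_eq_norm]; exact hzx j
      have h3 := htjK j
      have h4 : min γε (δ3 / 2) ≤ δ3 / 2 := min_le_right _ _
      have h5 : dist x xb < δ2 := mem_ball.mp hx2
      rw [hδ2def] at h5
      linarith
    have hzf : ∀ j, z j ∈ ball xb δf := fun j => hb3f (hz3 j)
    have hfz1 : ∀ j, f (z j) ∈ ball (f xb) 1 := fun j => (hball3 (z j) (mem_ball.mp (hz3 j))).2
    have hφzT : ∀ j, φ (z j) ≠ ⊤ := fun j => hzD j
    -- the Fréchet inequality, real form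
    have hFre' : ∀ j, (φ x).toReal + ((inner ℝ v (z j - x) : ℝ) - ε * ‖z j - x‖)
        ≤ (φ (z j)).toReal := by
      intro j
      have h1 := hFre (mem_ball.mp (hzγ j))
      rw [ereal_eq_coe hxT (hbot' x), ereal_eq_coe (hφzT j) (hbot' _), ← EReal.coe_add,
        EReal.coe_le_coe_iff] at h1
      simpa using h1
    -- Lipschitz + convexity chain, real form
    have hchain : ∀ j, (φ (z j)).toReal ≤ (1 - tj j) * (φ x).toReal + tj j * (φ y).toReal
        + ℓ * (Lf * (κ * η j + (tj j) ^ 2) + η j) := by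
      intro j
      have hLip1 : (ϑ (f (z j))).toReal ≤ (ϑ (cp j)).toReal + ℓ * ‖f (z j) - cp j‖ := by
        refine hLIP (f (z j)) ⟨hzD j, ball_subset_closedBall (hfz1 j)⟩ (cp j)
          ⟨hcpD j, ball_subset_closedBall (hcp1 j)⟩
      have hcvx : (ϑ (cp j)).toReal ≤ (1 - tj j) * (ϑ (f x)).toReal
          + tj j * (ϑ (f y)).toReal := by
        have h1 := (convex_pt hconv hbot (p := f x) (q := f y) hxT hyT
          (t := 1 - tj j) (by linarith [htj1 j]) (by linarith [(htj0 j).le])).2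
        rw [comb_eq (tj j) (f x) (f y)] at h1
        calc (ϑ (cp j)).toReal ≤ (1 - tj j) * (ϑ (f x)).toReal
            + (1 - (1 - tj j)) * (ϑ (f y)).toReal := h1
          _ = (1 - tj j) * (ϑ (f x)).toReal + tj j * (ϑ (f y)).toReal := by ring
      have hfzc : ‖f (z j) - cp j‖ ≤ Lf * (κ * η j + (tj j) ^ 2) + η j := by
        have h1 : ‖f (z j) - cp j‖ ≤ ‖f (z j) - f (mp j)‖ + ‖f (mp j) - cp j‖ := by
          have := norm_add_le (f (z j) - f (mp j)) (f (mp j) - cp j)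
          rwa [show f (z j) - f (mp j) + (f (mp j) - cp j) = f (z j) - cp j by abel] at this
        have h2 : ‖f (z j) - f (mp j)‖ ≤ Lf * ‖z j - mp j‖ := hlip (mp j) (hmpf j) (z j) (hzf j)
        have h3 := hzm j
        have h4 : ‖f (mp j) - cp j‖ = η j := rfl
        nlinarith
      have hstep : ℓ * ‖f (z j) - cp j‖ ≤ ℓ * (Lf * (κ * η j + (tj j) ^ 2) + η j) :=
        mul_le_mul_of_nonneg_left hfzc hℓ0
      linarith
    -- inner ℝ product decomposition
    have hinner : ∀ j, (inner ℝ v (z j - x) : ℝ)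
        ≥ tj j * (inner ℝ v (y - x) : ℝ) - ‖v‖ * (κ * η j + (tj j) ^ 2) := by
      intro j
      have h1 : z j - x = tj j • (y - x) + (z j - mp j) := by
        rw [hmpdef]
        simp only
        abel
      rw [h1, inner_add_right, real_inner_smul_right]
      have h2 : |(inner ℝ v (z j - mp j) : ℝ)| ≤ ‖v‖ * ‖z j - mp j‖ := abs_real_inner_le_norm _ _
      have h3 := hzm j
      have h4 : (inner ℝ v (z j - mp j) : ℝ) ≥ -(‖v‖ * (κ * η j + (tj j) ^ 2)) := by
        have h5 := neg_abs_le (inner ℝ v (z j - mp j) : ℝ)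
        have h6 : ‖v‖ * ‖z j - mp j‖ ≤ ‖v‖ * (κ * η j + (tj j) ^ 2) :=
          mul_le_mul_of_nonneg_left h3 (norm_nonneg v)
        linarith
      linarith
    have hznorm : ∀ j, ‖z j - x‖ ≤ tj j * ‖y - x‖ + (κ * η j + (tj j) ^ 2) := by
      intro j
      have h1 : ‖z j - x‖ ≤ ‖z j - mp j‖ + ‖mp j - x‖ := by
        have := norm_add_le (z j - mp j) (mp j - x)
        rwa [show z j - mp j + (mp j - x) = z j - x by abel] at this
      have h2 : ‖mp j - x‖ = tj j * ‖y - x‖ := by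
        rw [hmpdef]
        simp only
        rw [show x + tj j • (y - x) - x = tj j • (y - x) by abel, norm_smul,
          Real.norm_eq_abs, abs_of_pos (htj0 j)]
      have h3 := hzm j
      linarith
    -- per-j lower bound for (φ y).toReal
    set q : ℕ → ℝ := fun j => (tj j)⁻¹ * η j with hqdef
    have htq : ∀ j, tj j * q j = η j := by
      intro j
      rw [hqdef]
      simp only
      rw [← mul_assoc, mul_inv_cancel₀ (htj0 j).ne', one_mul]
    set G : ℕ → ℝ := fun j => (φ x).toReal + (inner ℝ v (y - x) : ℝ)
      - ‖v‖ * (κ * q j + tj j) - ε * (‖y - x‖ + κ * q j + tj j)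
      - ℓ * ((Lf * κ + 1) * q j + Lf * tj j) with hGdef
    have hGle : ∀ j, G j ≤ (φ y).toReal := by
      intro j
      have ht := htj0 j
      refine le_of_mul_le_mul_left ?_ ht
      have e1 : tj j * G j = tj j * (φ x).toReal + tj j * (inner ℝ v (y - x) : ℝ)
          - ‖v‖ * (κ * (tj j * q j) + (tj j) ^ 2)
          - ε * (tj j * ‖y - x‖ + κ * (tj j * q j) + (tj j) ^ 2)
          - ℓ * ((Lf * κ + 1) * (tj j * q j) + Lf * (tj j) ^ 2) := by
        rw [hGdef]
        ring
      rw [e1, htq j]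
      have hF := hFre' j
      have hC := hchain j
      have hI := hinner j
      have hZ := hznorm j
      have hεZ : ε * ‖z j - x‖ ≤ ε * (tj j * ‖y - x‖ + (κ * η j + (tj j) ^ 2)) :=
        mul_le_mul_of_nonneg_left hZ hε.le
      nlinarith
    -- limit of G
    have hqt : Tendsto q atTop (𝓝 E) := by
      have h1 : Tendsto tj atTop (𝓝[>] (0:ℝ)) :=
        tendsto_nhdsWithin_of_tendsto_nhds_of_eventually_within tj htjt
          (Filter.Eventually.of_forall htj0)
      have h2 := (eta_quot (hdiff x hxf) y).comp h1
      exact h2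
    have hGt : Tendsto G atTop (𝓝 ((φ x).toReal + (inner ℝ v (y - x) : ℝ)
        - (ℓ * (Lf * κ + 1) + ‖v‖ * κ) * E - ε * (κ * E + ‖y - x‖))) := by
      have h1 : Tendsto (fun j => (φ x).toReal + (inner ℝ v (y - x) : ℝ)
          - ‖v‖ * (κ * q j + tj j) - ε * (‖y - x‖ + κ * q j + tj j)
          - ℓ * ((Lf * κ + 1) * q j + Lf * tj j)) atTop
          (𝓝 ((φ x).toReal + (inner ℝ v (y - x) : ℝ)
          - ‖v‖ * (κ * E + 0) - ε * (‖y - x‖ + κ * E + 0)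
          - ℓ * ((Lf * κ + 1) * E + Lf * 0))) := by
        refine Filter.Tendsto.sub (Filter.Tendsto.sub (Filter.Tendsto.sub tendsto_const_nhds
          ?_) ?_) ?_
        · exact (((hqt.const_mul κ).add htjt).const_mul ‖v‖)
        · exact (((tendsto_const_nhds.add (hqt.const_mul κ)).add htjt).const_mul ε)
        · exact (((hqt.const_mul (Lf * κ + 1)).add (htjt.const_mul Lf)).const_mul ℓ)
      have h2 : (φ x).toReal + (inner ℝ v (y - x) : ℝ) - ‖v‖ * (κ * E + 0)
          - ε * (‖y - x‖ + κ * E + 0) - ℓ * ((Lf * κ + 1) * E + Lf * 0)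
          = (φ x).toReal + (inner ℝ v (y - x) : ℝ)
          - (ℓ * (Lf * κ + 1) + ‖v‖ * κ) * E - ε * (κ * E + ‖y - x‖) := by ring
      rw [h2] at h1
      exact h1
    exact le_of_tendsto' hGt hGle
  -- LIMITING ARGUMENT
  rintro v ⟨xk, vk, hxk, hφk, hvk, hfrk⟩
  set C1 : ℝ := ℓ * (Lf * κ + 1) + ‖v‖ * κ with hC1def
  have hC10 : 0 ≤ C1 := by positivity
  set C2 : ℝ := (C1 + 1) * Cf with hC2def
  have hC20 : 0 ≤ C2 := by positivity
  refine ⟨2 * C2 + 1, by positivity, δ2, hδ2, ?_⟩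
  intro y hy
  by_cases hyT : φ y = ⊤
  · rw [hyT]
    exact le_top
  -- eventual facts along the sequence
  have hevk : ∀ᶠ k in atTop, (xk k ∈ ball xb δ2) ∧ φ (xk k) ≠ ⊤ ∧ ‖vk k‖ ≤ ‖v‖ + 1 := by
    have h1 : ∀ᶠ k in atTop, xk k ∈ ball xb δ2 := hxk (ball_mem_nhds _ hδ2)
    have h2 : ∀ᶠ k in atTop, φ (xk k) ≠ ⊤ := hφk.eventually_ne hdom
    have h3 : ∀ᶠ k in atTop, ‖vk k‖ < ‖v‖ + 1 := by
      have h4 : Tendsto (fun k => ‖vk k‖) atTop (𝓝 ‖v‖) := hvk.norm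
      exact Filter.Tendsto.eventually_lt_const (by linarith) h4
    filter_upwards [h1, h2, h3] with k hk1 hk2 hk3
    exact ⟨hk1, hk2, hk3.le⟩
  -- the per-k inequality
  have hineq : ∀ᶠ k in atTop, (φ (xk k)).toReal + (inner ℝ (vk k) (y - xk k) : ℝ)
      - (ℓ * (Lf * κ + 1) + ‖vk k‖ * κ)
        * ‖fderiv ℝ f (xk k) (y - xk k) - (f y - f (xk k))‖ ≤ (φ y).toReal := by
    filter_upwards [hevk] with k hk
    exact key (xk k) hk.1 (vk k) (hfrk k) hk.2.1 y hy hyT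
  -- limits
  have hT1 : Tendsto (fun k => (φ (xk k)).toReal) atTop (𝓝 ((φ xb).toReal)) :=
    (EReal.tendsto_toReal hdom (hbot' xb)).comp hφk
  have hT2 : Tendsto (fun k => (inner ℝ (vk k) (y - xk k) : ℝ)) atTop
      (𝓝 ((inner ℝ v (y - xb) : ℝ))) :=
    hvk.inner (tendsto_const_nhds.sub hxk)
  have hT3 : Tendsto (fun k => ‖vk k‖) atTop (𝓝 ‖v‖) := hvk.norm
  have hTf : Tendsto (fun k => f (xk k)) atTop (𝓝 (f xb)) := hfc.tendsto.comp hxk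
  have hTg : Tendsto (fun k => fderiv ℝ f (xk k)) atTop (𝓝 (fderiv ℝ f xb)) :=
    (hf.2.continuousAt.tendsto).comp hxk
  have hT4 : Tendsto (fun k => ‖fderiv ℝ f (xk k) (y - xk k) - (f y - f (xk k))‖) atTop
      (𝓝 ‖fderiv ℝ f xb (y - xb) - (f y - f xb)‖) := by
    have h1 : Tendsto (fun k => (fderiv ℝ f (xk k), y - xk k)) atTop
        (𝓝 (fderiv ℝ f xb, y - xb)) := hTg.prodMk_nhds (tendsto_const_nhds.sub hxk)
    have h2 : Continuous (fun p : (Euc n →L[ℝ] Euc m) × Euc n => p.1 p.2) :=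
      isBoundedBilinearMap_apply.continuous
    have h3 : Tendsto (fun k => fderiv ℝ f (xk k) (y - xk k)) atTop
        (𝓝 (fderiv ℝ f xb (y - xb))) := (h2.tendsto _).comp h1
    exact (h3.sub (tendsto_const_nhds.sub hTf)).norm
  have hlim : (φ xb).toReal + (inner ℝ v (y - xb) : ℝ)
      - C1 * ‖fderiv ℝ f xb (y - xb) - (f y - f xb)‖ ≤ (φ y).toReal := by
    refine le_of_tendsto_of_tendsto ?_ tendsto_const_nhds hineq
    rw [hC1def]
    exact (hT1.add hT2).sub (((tendsto_const_nhds.add (hT3.mul_const κ)).mul hT4).congr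
      (fun k => by ring))
  -- conclude
  have hEq : ‖fderiv ℝ f xb (y - xb) - (f y - f xb)‖ ≤ Cf * ‖y - xb‖ ^ 2 := by
    have h1 := hquad y (hb3f (hb23 hy))
    rw [show fderiv ℝ f xb (y - xb) - (f y - f xb)
      = -(f y - f xb - fderiv ℝ f xb (y - xb)) by abel, norm_neg]
    exact h1
  have hφxb : φ xb = (((φ xb).toReal : ℝ) : EReal) :=
    ereal_eq_coe (show φ xb ≠ ⊤ from hdom) (hbot' xb)
  have hφy : φ y = (((φ y).toReal : ℝ) : EReal) := ereal_eq_coe hyT (hbot' y)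
  rw [hφxb, hφy, ← EReal.coe_add, EReal.coe_le_coe_iff]
  have hfinal : C1 * ‖fderiv ℝ f xb (y - xb) - (f y - f xb)‖ ≤ C2 * ‖y - xb‖ ^ 2 := by
    calc C1 * ‖fderiv ℝ f xb (y - xb) - (f y - f xb)‖ ≤ C1 * (Cf * ‖y - xb‖ ^ 2) :=
        mul_le_mul_of_nonneg_left hEq hC10
      _ ≤ C2 * ‖y - xb‖ ^ 2 := by rw [hC2def]; nlinarith [sq_nonneg ‖y - xb‖]
  have h9 : (2 * C2 + 1) / 2 * ‖y - xb‖ ^ 2 ≥ C2 * ‖y - xb‖ ^ 2 := by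
    nlinarith [sq_nonneg ‖y - xb‖]
  linarith

end Stmt10Aux
end Stmt10Aux7
section Stmt10Aux8
open Filter Topology Metric Set
namespace Stmt10Aux
set_option maxHeartbeats 4000000

variable {n m : ℕ}

lemma crit_subset_dom2 {f : Euc n → Euc m} {ϑ : Euc m → EReal} {xb : Euc n} {vb : Euc n}
    (hf : TwiceDiffAt f xb) (hbot : ∀ y, ϑ y ≠ ⊥) (R : PLQRepr ϑ)
    (hconv : ERealConvexOn ϑ) (hdom : ϑ (f xb) ≠ ⊤)
    {κ : ℝ} (hmsqc : MSQCAt f (edom ϑ) xb κ)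
    {w : Euc n} (hw : w ∈ critCone (fun x => ϑ (f x)) xb vb) :
    secondSubderiv (fun x => ϑ (f x)) xb vb w ≠ ⊤ := by
  classical
  set φ : Euc n → EReal := fun x => ϑ (f x) with hφdef
  have hbot' : ∀ x, φ x ≠ ⊥ := fun x => hbot _
  have hxT : φ xb ≠ ⊤ := hdom
  set D : Set (Euc m) := edom ϑ with hD
  have hxbD : f xb ∈ D := hdom
  haveI : ((𝓝[>] (0:ℝ)) ×ˢ 𝓝 w).NeBot := neBotF w
  obtain ⟨δf, hδf, Cf, hCf, Lf, hLf, hdiff, hlip, hquad⟩ := f_package hf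
  obtain ⟨ℓ, hℓ0, hLIP⟩ := plq_lip R hconv hbot (f xb) 1
  have hκ0 : 0 ≤ κ := hmsqc.1
  have hfc : ContinuousAt f xb := (hdiff xb (mem_ball_self hδf)).continuousAt
  have hev : ∀ᶠ x in 𝓝 xb,
      (Metric.infDist x (f ⁻¹' D) ≤ κ * Metric.infDist (f x) D) ∧ f x ∈ ball (f xb) 1 :=
    hmsqc.2.and (hfc.eventually_mem (ball_mem_nhds _ one_pos))
  obtain ⟨δm, hδm, hevm⟩ := Metric.eventually_nhds_iff.mp hev
  set δ3 : ℝ := min δf δm with hδ3def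
  have hδ3 : 0 < δ3 := lt_min hδf hδm
  have hδ3f : δ3 ≤ δf := min_le_left _ _
  have hδ3m : δ3 ≤ δm := min_le_right _ _
  have hball3 : ∀ x : Euc n, dist x xb < δ3 →
      (Metric.infDist x (f ⁻¹' D) ≤ κ * Metric.infDist (f x) D) ∧ f x ∈ ball (f xb) 1 :=
    fun x hx => hevm (lt_of_lt_of_le hx hδ3m)
  have hb3f : ball xb δ3 ⊆ ball xb δf := ball_subset_ball hδ3f
  clear_value δ3
  set L : ℝ := (inner ℝ vb w : ℝ) with hLdef
  have hcrit : Filter.liminf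
      (fun p : ℝ × Euc n => ((p.1⁻¹ : ℝ) : EReal) * (φ (xb + p.1 • p.2) - φ xb))
      ((𝓝[>] (0:ℝ)) ×ˢ 𝓝 w) = (L : EReal) := hw
  -- STEP 2 : minimizing sequence for the subderivative
  have hfreq : ∀ j : ℕ, ∃ᶠ p in (𝓝[>] (0:ℝ)) ×ˢ 𝓝 w,
      (((p.1⁻¹ : ℝ) : EReal) * (φ (xb + p.1 • p.2) - φ xb) < ((L + 1/(j+1) : ℝ) : EReal)
        ∧ ((L - 1/(j+1) : ℝ) : EReal)
          < ((p.1⁻¹ : ℝ) : EReal) * (φ (xb + p.1 • p.2) - φ xb)) := by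
    intro j
    have h1 : ∃ᶠ p in (𝓝[>] (0:ℝ)) ×ˢ 𝓝 w,
        ((p.1⁻¹ : ℝ) : EReal) * (φ (xb + p.1 • p.2) - φ xb) < ((L + 1/(j+1) : ℝ) : EReal) := by
      refine Filter.frequently_lt_of_liminf_lt (h := ?_)
      rw [hcrit, EReal.coe_lt_coe_iff]
      have : (0:ℝ) < 1/((j:ℝ)+1) := by positivity
      push_cast
      linarith
    have h2 : ∀ᶠ p in (𝓝[>] (0:ℝ)) ×ˢ 𝓝 w,
        ((L - 1/(j+1) : ℝ) : EReal)
          < ((p.1⁻¹ : ℝ) : EReal) * (φ (xb + p.1 • p.2) - φ xb) := by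
      refine Filter.eventually_lt_of_lt_liminf ?_
      rw [hcrit, EReal.coe_lt_coe_iff]
      have : (0:ℝ) < 1/((j:ℝ)+1) := by positivity
      push_cast
      linarith
    exact h1.and_eventually h2
  obtain ⟨t, u, ht0, ht, hu, hQ⟩ := exists_seq_of_frequently hfreq
  have hnT : ∀ j, φ (xb + t j • u j) ≠ ⊤ := by
    intro j hT
    have h1 := (hQ j).1
    rw [subQuot_top (ht0 j) hT hxT (hbot' xb)] at h1
    exact absurd h1 not_top_lt
  set s : ℕ → ℝ := fun j => (t j)⁻¹ * ((φ (xb + t j • u j)).toReal - (φ xb).toReal)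
    with hsdef
  have hsb : ∀ j, s j < L + 1/(j+1) ∧ L - 1/(j+1) < s j := by
    intro j
    have h1 := (hQ j).1
    have h2 := (hQ j).2
    rw [subQuot_coe (hnT j) (hbot' _) hxT (hbot' xb)] at h1 h2
    exact ⟨by exact_mod_cast h1, by exact_mod_cast h2⟩
  have hεj : Tendsto (fun j : ℕ => 1/((j:ℝ)+1)) atTop (𝓝 0) :=
    tendsto_one_div_add_atTop_nhds_zero_nat
  have hst : Tendsto s atTop (𝓝 L) := by
    have hlow : Tendsto (fun j : ℕ => L - 1/((j:ℝ)+1)) atTop (𝓝 (L - 0)) :=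
      tendsto_const_nhds.sub hεj
    have hhigh : Tendsto (fun j : ℕ => L + 1/((j:ℝ)+1)) atTop (𝓝 (L + 0)) :=
      tendsto_const_nhds.add hεj
    rw [sub_zero] at hlow
    rw [add_zero] at hhigh
    exact tendsto_of_tendsto_of_tendsto_of_le_of_le hlow hhigh
      (fun j => (hsb j).2.le) (fun j => (hsb j).1.le)
  -- STEP 3 : image points and directions
  set A : Euc n →L[ℝ] Euc m := fderiv ℝ f xb with hAdef
  set xk : ℕ → Euc n := fun j => xb + t j • u j with hxkdef
  set yk : ℕ → Euc m := fun j => f (xk j) with hykdef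
  have hykD : ∀ j, yk j ∈ D := fun j => hnT j
  set dk : ℕ → Euc m := fun j => (t j)⁻¹ • (yk j - f xb) with hdkdef
  have hyk_eq : ∀ j, yk j = f xb + t j • dk j := by
    intro j
    rw [hdkdef]
    simp only
    rw [smul_inv_smul₀ (ne_of_gt (ht0 j))]
    abel
  have hxkt : Tendsto xk atTop (𝓝 xb) := by
    have h1 : Tendsto (fun j => xb + t j • u j) atTop (𝓝 (xb + (0:ℝ) • w)) :=
      tendsto_const_nhds.add (ht.smul hu)
    simpa using h1
  have hxkball : ∀ᶠ j in atTop, xk j ∈ ball xb δ3 := hxkt (ball_mem_nhds _ hδ3)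
  have hdk_lim : Tendsto dk atTop (𝓝 (A w)) := by
    have herr : Tendsto (fun j => dk j - A (u j)) atTop (𝓝 0) := by
      have hub : ∀ᶠ j in atTop, ‖u j‖ ≤ ‖w‖ + 1 := by
        have h4 : Tendsto (fun j => ‖u j‖) atTop (𝓝 ‖w‖) := hu.norm
        exact (Filter.Tendsto.eventually_lt_const (by linarith) h4).mono fun j h => h.le
      have hb : ∀ᶠ j in atTop, ‖dk j - A (u j)‖ ≤ Cf * (‖w‖+1)^2 * t j := by
        filter_upwards [hxkball, hub] with j hj hju
        have h1 : (t j)⁻¹ • (f (xk j) - f xb - A (t j • u j)) = dk j - A (u j) := by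
          have e1 : f (xk j) - f xb - A (t j • u j) = t j • (dk j - A (u j)) := by
            have e2 : f (xk j) = f xb + t j • dk j := hyk_eq j
            rw [e2, map_smul, smul_sub]
            abel
          rw [e1, smul_smul, inv_mul_cancel₀ (ne_of_gt (ht0 j)), one_smul]
        have h2 : ‖f (xk j) - f xb - A (xk j - xb)‖ ≤ Cf * ‖xk j - xb‖^2 := hquad _ (hb3f hj)
        have h3 : xk j - xb = t j • u j := by simp only [hxkdef]; abel
        rw [h3] at h2
        have h4 : ‖t j • u j‖ = t j * ‖u j‖ := by
          rw [norm_smul, Real.norm_eq_abs, abs_of_pos (ht0 j)]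
        rw [← h1, norm_smul, Real.norm_eq_abs, abs_of_pos (inv_pos.mpr (ht0 j))]
        rw [h4] at h2
        have h5 : (t j)⁻¹ * ‖f (xk j) - f xb - A (t j • u j)‖
            ≤ (t j)⁻¹ * (Cf * (t j * ‖u j‖)^2) :=
          mul_le_mul_of_nonneg_left h2 (inv_pos.mpr (ht0 j)).le
        have htne : t j ≠ 0 := ne_of_gt (ht0 j)
        have h6 : (t j)⁻¹ * (Cf * (t j * ‖u j‖)^2) = Cf * ‖u j‖^2 * t j := by
          field_simp
        rw [h6] at h5
        refine h5.trans ?_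
        have h7 : ‖u j‖^2 ≤ (‖w‖+1)^2 := by nlinarith [norm_nonneg (u j)]
        have h8 : Cf * ‖u j‖^2 ≤ Cf * (‖w‖+1)^2 := mul_le_mul_of_nonneg_left h7 hCf
        exact mul_le_mul_of_nonneg_right h8 (ht0 j).le
      have hbt : Tendsto (fun j => Cf * (‖w‖+1)^2 * t j) atTop (𝓝 0) := by
        have := ht.const_mul (Cf * (‖w‖+1)^2)
        simpa using this
      exact squeeze_zero_norm' hb hbt
    have hAu : Tendsto (fun j => A (u j)) atTop (𝓝 (A w)) := (A.continuous.tendsto w).comp hu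
    have := herr.add hAu
    simp only [sub_add_cancel, zero_add] at this
    exact this
  have hykt : Tendsto yk atTop (𝓝 (f xb)) := hfc.tendsto.comp hxkt
  -- STEP 4 : pigeonhole to a piece
  have hPk : ∀ j, ∃ i, yk j ∈ R.piece i := by
    intro j
    have hd : yk j ∈ edom ϑ := hykD j
    rw [R.dom_eq] at hd
    exact Set.mem_iUnion.mp hd
  obtain ⟨i, σ, hσ, hσm⟩ := exists_subseq_mem hPk
  have hybP : f xb ∈ R.piece i :=
    (poly_isClosed (R.poly i)).mem_of_tendsto (hykt.comp hσ) (Filter.Eventually.of_forall hσm)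
  -- STEP 5 : slope identity on the piece
  set α : ℝ := (inner ℝ (R.A i (f xb) + R.a i) (A w) : ℝ) with hαdef
  have hsσ : ∀ j', s (σ j') = (inner ℝ (R.A i (f xb) + R.a i) (dk (σ j')) : ℝ)
      + t (σ j') / 2 * (inner ℝ (R.A i (dk (σ j'))) (dk (σ j')) : ℝ) := by
    intro j'
    have hq := quad_expand (R.A i) (R.symm i) (R.a i) (R.cst i) (f xb) (t (σ j') • dk (σ j'))
    rw [← hyk_eq (σ j')] at hq
    have hv1 : (ϑ (yk (σ j'))).toReal = 1 / 2 * (inner ℝ (R.A i (yk (σ j'))) (yk (σ j')) : ℝ)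
        + (inner ℝ (R.a i) (yk (σ j')) : ℝ) + R.cst i := by
      rw [R.val i _ (hσm j')]; exact EReal.toReal_coe _
    have hv2 : (ϑ (f xb)).toReal = 1 / 2 * (inner ℝ (R.A i (f xb)) (f xb) : ℝ)
        + (inner ℝ (R.a i) (f xb) : ℝ) + R.cst i := by
      rw [R.val i _ hybP]; exact EReal.toReal_coe _
    have hdiffval : (ϑ (yk (σ j'))).toReal - (ϑ (f xb)).toReal
        = (inner ℝ (R.A i (f xb) + R.a i) (t (σ j') • dk (σ j')) : ℝ)
          + 1 / 2 * (inner ℝ (R.A i (t (σ j') • dk (σ j'))) (t (σ j') • dk (σ j')) : ℝ) := by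
      rw [hv1, hv2, hq]
      ring
    have hsm1 : (inner ℝ (R.A i (f xb) + R.a i) (t (σ j') • dk (σ j')) : ℝ)
        = t (σ j') * (inner ℝ (R.A i (f xb) + R.a i) (dk (σ j')) : ℝ) :=
      real_inner_smul_right _ _ _
    have hsm2 : (inner ℝ (R.A i (t (σ j') • dk (σ j'))) (t (σ j') • dk (σ j')) : ℝ)
        = t (σ j') ^ 2 * (inner ℝ (R.A i (dk (σ j'))) (dk (σ j')) : ℝ) := by
      rw [map_smul, real_inner_smul_right, real_inner_smul_left]
      ring
    rw [hsdef]
    simp only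
    have hφv : (φ (xb + t (σ j') • u (σ j'))).toReal = (ϑ (yk (σ j'))).toReal := rfl
    have hφv2 : (φ xb).toReal = (ϑ (f xb)).toReal := rfl
    rw [hφv, hφv2, hdiffval, hsm1, hsm2]
    have htne : t (σ j') ≠ 0 := ne_of_gt (ht0 (σ j'))
    field_simp
  have hαL : α = L := by
    have h1 : Tendsto (fun j' => s (σ j')) atTop (𝓝 L) := hst.comp hσ
    have h2 : Tendsto (fun j' => (inner ℝ (R.A i (f xb) + R.a i) (dk (σ j')) : ℝ)
        + t (σ j') / 2 * (inner ℝ (R.A i (dk (σ j'))) (dk (σ j')) : ℝ)) atTop (𝓝 α) := by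
      have hdkσ : Tendsto (fun j' => dk (σ j')) atTop (𝓝 (A w)) := hdk_lim.comp hσ
      have htσ : Tendsto (fun j' => t (σ j')) atTop (𝓝 0) := ht.comp hσ
      have hc1 : Tendsto (fun j' => (inner ℝ (R.A i (f xb) + R.a i) (dk (σ j')) : ℝ)) atTop
          (𝓝 α) := ((continuous_const.inner continuous_id).tendsto (A w)).comp hdkσ
      have hc2 : Tendsto (fun j' => (inner ℝ (R.A i (dk (σ j'))) (dk (σ j')) : ℝ)) atTop
          (𝓝 ((inner ℝ (R.A i (A w)) (A w) : ℝ))) :=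
        (((R.A i).continuous.inner continuous_id).tendsto (A w)).comp hdkσ
      have h3 := hc1.add (((htσ.div_const 2).mul hc2))
      simpa using h3
    have h4 := h2.congr (fun j' => (hsσ j').symm)
    exact tendsto_nhds_unique h4 h1
  -- STEP 6 : segment in the piece
  obtain ⟨K, cs, bs, hPeq⟩ := R.poly i
  have hybK : ∀ jc, (inner ℝ (cs jc) (f xb) : ℝ) ≤ bs jc := by
    have := hybP
    rw [hPeq] at this
    exact this
  have hdir : ∀ jc, (inner ℝ (cs jc) (f xb) : ℝ) = bs jc → (inner ℝ (cs jc) (A w) : ℝ) ≤ 0 := by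
    intro jc heq
    have h1 : ∀ j', (inner ℝ (cs jc) (dk (σ j')) : ℝ) ≤ 0 := by
      intro j'
      have h2 := hσm j'
      rw [hPeq] at h2
      have h3 := h2 jc
      rw [hyk_eq (σ j'), inner_add_right, real_inner_smul_right, heq] at h3
      nlinarith [ht0 (σ j')]
    have h4 : Tendsto (fun j' => (inner ℝ (cs jc) (dk (σ j')) : ℝ)) atTop
        (𝓝 ((inner ℝ (cs jc) (A w) : ℝ))) :=
      ((continuous_const.inner continuous_id).tendsto (A w)).comp (hdk_lim.comp hσ)
    exact le_of_tendsto h4 (Filter.Eventually.of_forall h1)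
  have hseg : ∀ᶠ τ in 𝓝 (0:ℝ), ∀ jc : Fin K,
      0 ≤ τ → (inner ℝ (cs jc) (f xb) : ℝ) + τ * (inner ℝ (cs jc) (A w) : ℝ) ≤ bs jc := by
    rw [eventually_all]
    intro jc
    by_cases heq : (inner ℝ (cs jc) (f xb) : ℝ) = bs jc
    · refine Filter.Eventually.of_forall (fun τ hτ => ?_)
      have h1 := hdir jc heq
      nlinarith
    · have hlt : (inner ℝ (cs jc) (f xb) : ℝ) < bs jc := lt_of_le_of_ne (hybK jc) heq
      have hco : Tendsto (fun τ : ℝ => (inner ℝ (cs jc) (f xb) : ℝ)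
          + τ * (inner ℝ (cs jc) (A w) : ℝ)) (𝓝 0)
          (𝓝 ((inner ℝ (cs jc) (f xb) : ℝ) + 0 * (inner ℝ (cs jc) (A w) : ℝ))) := by
        exact tendsto_const_nhds.add ((continuous_id.mul continuous_const).tendsto 0)
      rw [zero_mul, add_zero] at hco
      exact (Filter.Tendsto.eventually_lt_const hlt hco).mono (fun τ h _ => h.le)
  obtain ⟨ε0, hε0, hsegb⟩ := Metric.eventually_nhds_iff.mp hseg
  have hsegP : ∀ τ : ℝ, 0 ≤ τ → τ < ε0 → f xb + τ • A w ∈ R.piece i := by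
    intro τ hτ0 hτε
    rw [hPeq]
    intro jc
    have h1 : dist τ (0:ℝ) < ε0 := by
      rw [Real.dist_eq, sub_zero, abs_of_nonneg hτ0]
      exact hτε
    have h2 := hsegb h1 jc hτ0
    rwa [inner_add_right, real_inner_smul_right]
  have hPsubD : R.piece i ⊆ D := by
    rw [hD, R.dom_eq]
    exact Set.subset_iUnion _ i
  -- STEP 7 : values along the segment
  set β : ℝ := 1 / 2 * (inner ℝ (R.A i (A w)) (A w) : ℝ) with hβdef
  have hϑseg : ∀ τ : ℝ, 0 ≤ τ → τ < ε0 →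
      (ϑ (f xb + τ • A w)).toReal = (ϑ (f xb)).toReal + τ * L + τ ^ 2 * β := by
    intro τ hτ0 hτε
    have hq := quad_expand (R.A i) (R.symm i) (R.a i) (R.cst i) (f xb) (τ • A w)
    have hv1 : (ϑ (f xb + τ • A w)).toReal
        = 1 / 2 * (inner ℝ (R.A i (f xb + τ • A w)) (f xb + τ • A w) : ℝ)
          + (inner ℝ (R.a i) (f xb + τ • A w) : ℝ) + R.cst i := by
      rw [R.val i _ (hsegP τ hτ0 hτε)]; exact EReal.toReal_coe _
    have hv2 : (ϑ (f xb)).toReal = 1 / 2 * (inner ℝ (R.A i (f xb)) (f xb) : ℝ)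
        + (inner ℝ (R.a i) (f xb) : ℝ) + R.cst i := by
      rw [R.val i _ hybP]; exact EReal.toReal_coe _
    have hsm1 : (inner ℝ (R.A i (f xb) + R.a i) (τ • A w) : ℝ)
        = τ * (inner ℝ (R.A i (f xb) + R.a i) (A w) : ℝ) := real_inner_smul_right _ _ _
    have hsm2 : (inner ℝ (R.A i (τ • A w)) (τ • A w) : ℝ)
        = τ ^ 2 * (inner ℝ (R.A i (A w)) (A w) : ℝ) := by
      rw [map_smul, real_inner_smul_right, real_inner_smul_left]
      ring
    rw [hv1, hv2, hq, hsm1, hsm2, ← hαdef, hαL, hβdef]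
    ring
  -- STEP 8 : recovery sequence
  set W : ℝ := ‖w‖ with hWdef
  set M1 : ℝ := κ * Cf * W ^ 2 + 1 with hM1def
  have hM10 : 0 < M1 := by positivity
  set t1 : ℝ := min (ε0 / 2) (min (1 / (‖A w‖ + 1)) (min 1 (δ3 / (2 * (M1 + W + 1)))))
    with ht1def
  have ht10 : 0 < t1 := by
    refine lt_min (by positivity) (lt_min (by positivity) (lt_min one_pos (by positivity)))
  have ht1a : t1 ≤ ε0 / 2 := min_le_left _ _
  have ht1b : t1 ≤ 1 / (‖A w‖ + 1) := (min_le_right _ _).trans (min_le_left _ _)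
  have ht1c : t1 ≤ 1 := (min_le_right _ _).trans ((min_le_right _ _).trans (min_le_left _ _))
  have ht1d : t1 ≤ δ3 / (2 * (M1 + W + 1)) :=
    (min_le_right _ _).trans ((min_le_right _ _).trans (min_le_right _ _))
  clear_value t1
  set tk : ℕ → ℝ := fun j => t1 / (j + 1) with htkdef
  have htk0 : ∀ j, 0 < tk j := fun j => by positivity
  have htk1 : ∀ j, tk j ≤ t1 := by
    intro j
    rw [htkdef]
    simp only
    rw [div_le_iff₀ (by positivity)]
    nlinarith [Nat.cast_nonneg (α := ℝ) j]
  have htkt : Tendsto tk atTop (𝓝 0) := by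
    have h1 : Tendsto (fun j : ℕ => t1 * (1 / (j + 1))) atTop (𝓝 (t1 * 0)) :=
      tendsto_const_nhds.mul tendsto_one_div_add_atTop_nhds_zero_nat
    rw [mul_zero] at h1
    refine h1.congr fun j => ?_
    rw [htkdef, mul_one_div]
  clear_value tk
  -- the base points
  set pb : ℕ → Euc n := fun j => xb + tk j • w with hpbdef
  have hpb3 : ∀ j, pb j ∈ ball xb δ3 := by
    intro j
    rw [mem_ball, dist_eq_norm, hpbdef]
    simp only
    rw [show xb + tk j • w - xb = tk j • w by abel, norm_smul, Real.norm_eq_abs,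
      abs_of_pos (htk0 j)]
    have h1 := htk1 j
    have h2 := ht1d
    have h3 := htk0 j
    have h4 : tk j * W ≤ δ3 / (2 * (M1 + W + 1)) * W := by nlinarith [hWdef ▸ norm_nonneg w]
    have h5 : (0:ℝ) ≤ W := norm_nonneg w
    have h6 : δ3 / (2 * (M1 + W + 1)) * W < δ3 := by
      rw [div_mul_eq_mul_div, div_lt_iff₀ (by positivity)]
      nlinarith
    calc tk j * ‖w‖ ≤ δ3 / (2 * (M1 + W + 1)) * W := h4
      _ < δ3 := h6
  have hsegD : ∀ j, f xb + tk j • A w ∈ D := by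
    intro j
    refine hPsubD (hsegP (tk j) (htk0 j).le ?_)
    have := htk1 j
    linarith [ht1a, hε0]
  have hfpb : ∀ j, ‖f (pb j) - (f xb + tk j • A w)‖ ≤ Cf * W ^ 2 * tk j ^ 2 := by
    intro j
    have h1 := hquad (pb j) (hb3f (hpb3 j))
    have h2 : pb j - xb = tk j • w := by simp only [hpbdef]; abel
    rw [h2, map_smul] at h1
    have h3 : f (pb j) - (f xb + tk j • A w) = f (pb j) - f xb - tk j • A w := by abel
    rw [h3]
    refine h1.trans ?_
    rw [norm_smul, Real.norm_eq_abs, abs_of_pos (htk0 j)]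
    calc Cf * (tk j * ‖w‖) ^ 2 = Cf * W ^ 2 * tk j ^ 2 := by rw [hWdef]; ring
      _ ≤ Cf * W ^ 2 * tk j ^ 2 := le_refl _
  -- metric subregularity selection
  have hzex : ∀ j, ∃ z : Euc n, z ∈ f ⁻¹' D ∧ dist (pb j) z < M1 * tk j ^ 2 := by
    intro j
    have h1 : Metric.infDist (f (pb j)) D ≤ Cf * W ^ 2 * tk j ^ 2 := by
      have h2 := Metric.infDist_le_dist_of_mem (x := f (pb j)) (hsegD j)
      rw [dist_eq_norm] at h2
      exact h2.trans (hfpb j)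
    have h3 := (hball3 (pb j) (mem_ball.mp (hpb3 j))).1
    have h4 : Metric.infDist (pb j) (f ⁻¹' D) < M1 * tk j ^ 2 := by
      have h5 : κ * Metric.infDist (f (pb j)) D ≤ κ * (Cf * W ^ 2 * tk j ^ 2) :=
        mul_le_mul_of_nonneg_left h1 hκ0
      have h6 : (0:ℝ) < tk j ^ 2 := pow_pos (htk0 j) 2
      rw [hM1def]
      nlinarith
    exact (Metric.infDist_lt_iff ⟨xb, hxbD⟩).mp h4
  choose z hzD hzd using hzex
  have hzp : ∀ j, ‖z j - pb j‖ ≤ M1 * tk j ^ 2 := by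
    intro j
    have := hzd j
    rw [dist_comm, dist_eq_norm] at this
    exact this.le
  have hz3 : ∀ j, z j ∈ ball xb δ3 := by
    intro j
    rw [mem_ball, dist_eq_norm]
    have h1 : ‖z j - xb‖ ≤ ‖z j - pb j‖ + ‖pb j - xb‖ := by
      have := norm_add_le (z j - pb j) (pb j - xb)
      rwa [show z j - pb j + (pb j - xb) = z j - xb by abel] at this
    have h2 : ‖pb j - xb‖ = tk j * W := by
      rw [hpbdef]
      simp only
      rw [show xb + tk j • w - xb = tk j • w by abel, norm_smul, Real.norm_eq_abs,
        abs_of_pos (htk0 j), hWdef]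
    have h3 := hzp j
    have h4 := htk1 j
    have h5 := htk0 j
    have hW0 : (0:ℝ) ≤ W := norm_nonneg w
    have h6 : tk j ^ 2 ≤ tk j := by nlinarith [ht1c]
    have h7 : ‖z j - xb‖ ≤ tk j * (M1 + W) := by nlinarith
    have h8 : tk j * (M1 + W) ≤ t1 * (M1 + W) := by nlinarith
    have h9 : t1 * (M1 + W) < δ3 := by
      have h10 : t1 * (2 * (M1 + W + 1)) ≤ δ3 := (le_div_iff₀ (by positivity)).mp ht1d
      nlinarith
    linarith
  -- the recovery sequence
  set uk : ℕ → Euc n := fun j => (tk j)⁻¹ • (z j - xb) with hukdef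
  have hxzu : ∀ j, xb + tk j • uk j = z j := by
    intro j
    rw [hukdef]
    simp only
    rw [smul_inv_smul₀ (ne_of_gt (htk0 j))]
    abel
  have huk : Tendsto uk atTop (𝓝 w) := by
    have herr : Tendsto (fun j => uk j - w) atTop (𝓝 0) := by
      have hb : ∀ j, ‖uk j - w‖ ≤ M1 * tk j := by
        intro j
        have h1 : uk j - w = (tk j)⁻¹ • (z j - pb j) := by
          have e1 : z j - pb j = tk j • (uk j - w) := by
            have e2 : z j = xb + tk j • uk j := (hxzu j).symm
            rw [e2]
            simp only [hpbdef]
            rw [smul_sub]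
            abel
          rw [e1, smul_smul, inv_mul_cancel₀ (ne_of_gt (htk0 j)), one_smul]
        rw [h1, norm_smul, Real.norm_eq_abs, abs_of_pos (inv_pos.mpr (htk0 j))]
        have h2 := hzp j
        have h3 : (tk j)⁻¹ * ‖z j - pb j‖ ≤ (tk j)⁻¹ * (M1 * tk j ^ 2) :=
          mul_le_mul_of_nonneg_left h2 (inv_pos.mpr (htk0 j)).le
        have htne : tk j ≠ 0 := ne_of_gt (htk0 j)
        have h4 : (tk j)⁻¹ * (M1 * tk j ^ 2) = M1 * tk j := by
          field_simp
        rw [h4] at h3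
        exact h3
      have hbt : Tendsto (fun j => M1 * tk j) atTop (𝓝 0) := by
        have := htkt.const_mul M1
        simpa using this
      exact squeeze_zero_norm hb hbt
    have h2 : Tendsto (fun j => (uk j - w) + w) atTop (𝓝 (0 + w)) :=
      herr.add tendsto_const_nhds
    simp only [sub_add_cancel, zero_add] at h2
    exact h2
  -- value estimate
  have hfz1 : ∀ j, f (z j) ∈ ball (f xb) 1 := fun j => (hball3 (z j) (mem_ball.mp (hz3 j))).2
  have hseg1 : ∀ j, f xb + tk j • A w ∈ closedBall (f xb) 1 := by
    intro j
    rw [mem_closedBall, dist_eq_norm]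
    rw [show f xb + tk j • A w - f xb = tk j • A w by abel, norm_smul, Real.norm_eq_abs,
      abs_of_pos (htk0 j)]
    have h1 := htk1 j
    have h2 := ht1b
    have h3 : (0:ℝ) ≤ ‖A w‖ := norm_nonneg _
    have h4 : tk j * ‖A w‖ ≤ (1 / (‖A w‖ + 1)) * ‖A w‖ := by nlinarith [htk0 j]
    have h5 : (1 / (‖A w‖ + 1)) * ‖A w‖ ≤ 1 := by
      rw [div_mul_eq_mul_div, div_le_iff₀ (by positivity)]
      nlinarith
    linarith
  have hchain : ∀ j, (ϑ (f (z j))).toReal ≤ (ϑ (f xb)).toReal + tk j * L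
      + tk j ^ 2 * (β + ℓ * (Lf * M1 + Cf * W ^ 2)) := by
    intro j
    have hLip1 : (ϑ (f (z j))).toReal ≤ (ϑ (f xb + tk j • A w)).toReal
        + ℓ * ‖f (z j) - (f xb + tk j • A w)‖ :=
      hLIP (f (z j)) ⟨hzD j, ball_subset_closedBall (hfz1 j)⟩ _ ⟨hsegD j, hseg1 j⟩
    have hδτ : tk j < ε0 := by
      have := htk1 j
      linarith [ht1a, hε0]
    have hvseg := hϑseg (tk j) (htk0 j).le hδτ
    have hdist : ‖f (z j) - (f xb + tk j • A w)‖
        ≤ Lf * (M1 * tk j ^ 2) + Cf * W ^ 2 * tk j ^ 2 := by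
      have h1 : ‖f (z j) - (f xb + tk j • A w)‖
          ≤ ‖f (z j) - f (pb j)‖ + ‖f (pb j) - (f xb + tk j • A w)‖ := by
        have := norm_add_le (f (z j) - f (pb j)) (f (pb j) - (f xb + tk j • A w))
        rwa [show f (z j) - f (pb j) + (f (pb j) - (f xb + tk j • A w))
          = f (z j) - (f xb + tk j • A w) by abel] at this
      have h2 : ‖f (z j) - f (pb j)‖ ≤ Lf * ‖z j - pb j‖ :=
        hlip (pb j) (hb3f (hpb3 j)) (z j) (hb3f (hz3 j))
      have h3 := hzp j
      have h4 := hfpb j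
      have h5 : Lf * ‖z j - pb j‖ ≤ Lf * (M1 * tk j ^ 2) :=
        mul_le_mul_of_nonneg_left h3 hLf
      linarith
    have h6 : ℓ * ‖f (z j) - (f xb + tk j • A w)‖
        ≤ ℓ * (Lf * (M1 * tk j ^ 2) + Cf * W ^ 2 * tk j ^ 2) :=
      mul_le_mul_of_nonneg_left hdist hℓ0
    rw [hvseg] at hLip1
    nlinarith
  -- quadDiff bound
  have hqb : ∀ j, quadDiff φ xb vb (tk j) (uk j)
      ≤ ((2 * (‖vb‖ * M1 + (β + ℓ * (Lf * M1 + Cf * W ^ 2))) : ℝ) : EReal) := by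
    intro j
    have hzT : φ (xb + tk j • uk j) ≠ ⊤ := by
      rw [hxzu j]
      exact hzD j
    rw [quadDiff_coe hzT (hbot' _) hxT (hbot' xb)]
    rw [EReal.coe_le_coe_iff]
    have hφz : (φ (xb + tk j • uk j)).toReal = (ϑ (f (z j))).toReal := by rw [hxzu j]
    have hφxb' : (φ xb).toReal = (ϑ (f xb)).toReal := rfl
    have hch := hchain j
    have hin : L - (inner ℝ vb (uk j) : ℝ) ≤ ‖vb‖ * (M1 * tk j) := by
      have h1 : L - (inner ℝ vb (uk j) : ℝ) = (inner ℝ vb (w - uk j) : ℝ) := by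
        rw [inner_sub_right, hLdef]
      rw [h1]
      have h2 : (inner ℝ vb (w - uk j) : ℝ) ≤ ‖vb‖ * ‖w - uk j‖ :=
        (le_abs_self _).trans (abs_real_inner_le_norm _ _)
      have h3 : ‖w - uk j‖ ≤ M1 * tk j := by
        rw [norm_sub_rev]
        -- from huk's bound; rederive
        have h4 : uk j - w = (tk j)⁻¹ • (z j - pb j) := by
          have e1 : z j - pb j = tk j • (uk j - w) := by
            have e2 : z j = xb + tk j • uk j := (hxzu j).symm
            rw [e2]
            simp only [hpbdef]
            rw [smul_sub]
            abel
          rw [e1, smul_smul, inv_mul_cancel₀ (ne_of_gt (htk0 j)), one_smul]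
        rw [h4, norm_smul, Real.norm_eq_abs, abs_of_pos (inv_pos.mpr (htk0 j))]
        have h5 := hzp j
        have h6 : (tk j)⁻¹ * ‖z j - pb j‖ ≤ (tk j)⁻¹ * (M1 * tk j ^ 2) :=
          mul_le_mul_of_nonneg_left h5 (inv_pos.mpr (htk0 j)).le
        have htne : tk j ≠ 0 := ne_of_gt (htk0 j)
        have h7 : (tk j)⁻¹ * (M1 * tk j ^ 2) = M1 * tk j := by
          field_simp
        rw [h7] at h6
        exact h6
      have h8 : ‖vb‖ * ‖w - uk j‖ ≤ ‖vb‖ * (M1 * tk j) :=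
        mul_le_mul_of_nonneg_left h3 (norm_nonneg vb)
      linarith
    -- final arithmetic
    have hkey : (φ (xb + tk j • uk j)).toReal - (φ xb).toReal - tk j * (inner ℝ vb (uk j) : ℝ)
        ≤ tk j ^ 2 * (‖vb‖ * M1 + (β + ℓ * (Lf * M1 + Cf * W ^ 2))) := by
      rw [hφz, hφxb']
      have h9 : tk j * (L - (inner ℝ vb (uk j) : ℝ)) ≤ tk j * (‖vb‖ * (M1 * tk j)) :=
        mul_le_mul_of_nonneg_left hin (htk0 j).le
      nlinarith [hch, h9]
    have htk2 : (0:ℝ) < tk j ^ 2 := pow_pos (htk0 j) 2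
    have h10 : 2 / tk j ^ 2 * ((φ (xb + tk j • uk j)).toReal - (φ xb).toReal
        - tk j * (inner ℝ vb (uk j) : ℝ))
        ≤ 2 / tk j ^ 2 * (tk j ^ 2 * (‖vb‖ * M1 + (β + ℓ * (Lf * M1 + Cf * W ^ 2)))) :=
      mul_le_mul_of_nonneg_left hkey (by positivity)
    have htkne : tk j ≠ 0 := ne_of_gt (htk0 j)
    have h11 : 2 / tk j ^ 2 * (tk j ^ 2 * (‖vb‖ * M1 + (β + ℓ * (Lf * M1 + Cf * W ^ 2))))
        = 2 * (‖vb‖ * M1 + (β + ℓ * (Lf * M1 + Cf * W ^ 2))) := by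
      field_simp
    rw [h11] at h10
    exact h10
  have hfin : secondSubderiv φ xb vb w
      ≤ ((2 * (‖vb‖ * M1 + (β + ℓ * (Lf * M1 + Cf * W ^ 2))) : ℝ) : EReal) := by
    unfold secondSubderiv
    exact liminf_le_of_seq htk0 htkt huk hqb
  intro hT
  rw [hT] at hfin
  exact absurd (top_le_iff.mp hfin) (EReal.coe_ne_top _)
end Stmt10Aux
end Stmt10Aux8
/-- for fully subamenable functions, limiting and proximal subgradients
coincide and the domain of the second subderivative is the critical cone. -/
theorem stmt10 {n m : ℕ} (f : Euc n → Euc m) (ϑ : Euc m → EReal) (xb : Euc n)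
    (hf : TwiceDiffAt f xb) (hbot : ∀ y, ϑ y ≠ ⊥) (hplq : IsPLQ ϑ)
    (hconv : ERealConvexOn ϑ) (hdom : ϑ (f xb) ≠ ⊤)
    (κ : ℝ) (hmsqc : MSQCAt f (edom ϑ) xb κ)
    (vb : Euc n) (hv : vb ∈ limSubdiff (fun x => ϑ (f x)) xb) :
    limSubdiff (fun x => ϑ (f x)) xb = proxSubdiff (fun x => ϑ (f x)) xb ∧
    {w : Euc n | secondSubderiv (fun x => ϑ (f x)) xb vb w ≠ ⊤} =
      critCone (fun x => ϑ (f x)) xb vb := by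
  obtain ⟨R⟩ := hplq
  have hlimprox := Stmt10Aux.lim_subset_prox hf hbot R hconv hdom hmsqc
  have heq : limSubdiff (fun x => ϑ (f x)) xb = proxSubdiff (fun x => ϑ (f x)) xb :=
    Set.Subset.antisymm hlimprox
      ((Stmt10Aux.prox_subset_frechet _ xb).trans (Stmt10Aux.frechet_subset_lim _ xb))
  have hvprox : vb ∈ proxSubdiff (fun x => ϑ (f x)) xb := hlimprox hv
  refine ⟨heq, ?_⟩
  ext w
  simp only [Set.mem_setOf_eq]
  constructor
  · intro hne
    exact Stmt10Aux.dom2_subset_crit hbot hdom hvprox hne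
  · intro hw
    exact Stmt10Aux.crit_subset_dom2 hf hbot R hconv hdom hmsqc hw
end
end

section
/- Let f: ℝⁿ → ℝᵐ be strictly differentiable at x̄, and let ϑ: ℝᵐ → ℝ ∪ {∞} be convex, lower semicontinuous around f(x̄), and Lipschitz continuous around f(x̄) relative to its domain with constant ℓ. If x ↦ f(x) − dom ϑ is metrically subregular at (x̄,0), then ϑ∘f is lower regular at x̄ and the equality chain rule ∂(ϑ∘f)(x̄) = ∂̂(ϑ∘f)(x̄) = ∇f(x̄)*∂ϑ(f(x̄)) holds, where ∂̂ is the regular (Fréchet) subdifferential and ∂ the limiting subdifferential. -/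
open Filter Topology Metric Set

noncomputable section

section L1
variable {N : Type*} [NormedAddCommGroup N] [InnerProductSpace ℝ N]

/-- local subgradient-type inequality for a convex function is global -/
lemma convex_loc_glob {G : N → ℝ} (hG : ConvexOn ℝ Set.univ G) {x w : N} {c s : ℝ}
    (hs : 0 < s)
    (h : ∀ y, dist y x < s → G x + ((inner ℝ w (y - x) : ℝ) - c * ‖y - x‖) ≤ G y) :
    ∀ u, G x + ((inner ℝ w u : ℝ) - c * ‖u‖) ≤ G (x + u) := by
  intro u
  rcases eq_or_ne u 0 with rfl | hu
  · simpa using h x (by simpa using hs)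
  have hu' : (0:ℝ) < ‖u‖ := norm_pos_iff.2 hu
  set t : ℝ := min 1 (s / (2 * ‖u‖)) with ht
  have ht0 : 0 < t := lt_min one_pos (by positivity)
  have ht1 : t ≤ 1 := min_le_left _ _
  have hy : dist (x + t • u) x < s := by
    rw [dist_eq_norm]
    have : x + t • u - x = t • u := by abel
    rw [this, norm_smul, Real.norm_eq_abs, abs_of_pos ht0]
    have : t ≤ s / (2 * ‖u‖) := min_le_right _ _
    calc t * ‖u‖ ≤ (s / (2 * ‖u‖)) * ‖u‖ := by nlinarith
    _ = s / 2 := by field_simp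
    _ < s := by linarith
  have h1 := h (x + t • u) hy
  have h2 : G (x + t • u) ≤ (1 - t) * G x + t * G (x + u) := by
    have := hG.2 (mem_univ x) (mem_univ (x + u)) (by linarith : (0:ℝ) ≤ 1 - t) ht0.le
      (by ring : (1 - t) + t = 1)
    have hpt : (1 - t) • x + t • (x + u) = x + t • u := by
      rw [smul_add]; module
    rwa [hpt] at this
  have h3 : x + t • u - x = t • u := by abel
  rw [h3, inner_smul_right, norm_smul, Real.norm_eq_abs, abs_of_pos ht0] at h1
  nlinarith [h1, h2]

end L1


lemma exists_multiplier {n m : ℕ} (A : Euc n →L[ℝ] Euc m) (g0 : Euc m → ℝ)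
    (hg : ConvexOn ℝ Set.univ g0) (hg00 : g0 0 = 0) (M : ℝ)
    (hlow : ∀ z, -(M * ‖z‖) ≤ g0 z)
    (v : Euc n) (hv : ∀ u, (inner ℝ v u : ℝ) ≤ g0 (A u)) :
    ∃ lam : Euc m, (∀ z, (inner ℝ lam z : ℝ) ≤ g0 z) ∧
      ContinuousLinearMap.adjoint A lam = v := by
  haveI : Nonempty {t : ℝ // 0 < t} := ⟨⟨1, one_pos⟩⟩
  -- the homogenization of g0
  set q : Euc m → ℝ := fun z => ⨅ t : {t : ℝ // 0 < t}, g0 (t.1 • z) / t.1 with hq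
  have hterm_low : ∀ z, ∀ t : {t : ℝ // 0 < t}, -(M * ‖z‖) ≤ g0 (t.1 • z) / t.1 := by
    intro z t
    have := hlow (t.1 • z)
    rw [norm_smul, Real.norm_eq_abs, abs_of_pos t.2] at this
    rw [le_div_iff₀ t.2]
    nlinarith [this]
  have hbdd : ∀ z, BddBelow (Set.range fun t : {t : ℝ // 0 < t} => g0 (t.1 • z) / t.1) := by
    intro z
    exact ⟨-(M * ‖z‖), by rintro x ⟨t, rfl⟩; exact hterm_low z t⟩
  have hq_le : ∀ z, q z ≤ g0 z := by
    intro z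
    have := ciInf_le (hbdd z) ⟨1, one_pos⟩
    simpa using this
  have hq_term : ∀ z, ∀ t : {t : ℝ // 0 < t}, q z ≤ g0 (t.1 • z) / t.1 :=
    fun z t => ciInf_le (hbdd z) t
  -- homogeneity
  have hq_smul_le : ∀ (c : ℝ), 0 < c → ∀ z, q (c • z) ≤ c * q z := by
    intro c hc z
    by_contra hcon
    push_neg at hcon
    have hlt : q z < (q (c • z)) / c := by rw [lt_div_iff₀ hc]; linarith
    obtain ⟨t, htlt⟩ := exists_lt_of_ciInf_lt hlt
    have key : q (c • z) ≤ g0 ((t.1 / c) • (c • z)) / (t.1 / c) :=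
      hq_term (c • z) ⟨t.1 / c, div_pos t.2 hc⟩
    rw [smul_smul, div_mul_cancel₀ _ hc.ne'] at key
    rw [div_div_eq_mul_div] at key
    rw [div_lt_iff₀ t.2] at htlt
    rw [le_div_iff₀ t.2] at key
    have h1 : g0 (t.1 • z) * c < q (c • z) / c * t.1 * c :=
      mul_lt_mul_of_pos_right htlt hc
    have h2 : q (c • z) / c * t.1 * c = q (c • z) * t.1 := by field_simp
    rw [h2] at h1
    linarith
  have hq_smul : ∀ (c : ℝ), 0 < c → ∀ z, q (c • z) = c * q z := by
    intro c hc z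
    refine le_antisymm (hq_smul_le c hc z) ?_
    have h := hq_smul_le c⁻¹ (by positivity) (c • z)
    rw [inv_smul_smul₀ hc.ne'] at h
    calc c * q z ≤ c * (c⁻¹ * q (c • z)) := mul_le_mul_of_nonneg_left h hc.le
    _ = q (c • z) := by field_simp
  -- subadditivity
  have hq_add : ∀ x y, q (x + y) ≤ q x + q y := by
    intro x y
    by_contra hcon
    push_neg at hcon
    set ε : ℝ := (q (x + y) - q x - q y) / 3 with hε
    have hε0 : 0 < ε := by simp only [hε]; linarith
    obtain ⟨t, ht⟩ := exists_lt_of_ciInf_lt (show q x < q x + ε by linarith)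
    obtain ⟨s, hs⟩ := exists_lt_of_ciInf_lt (show q y < q y + ε by linarith)
    set r : ℝ := t.1 * s.1 / (t.1 + s.1) with hr
    have hts : 0 < t.1 + s.1 := by linarith [t.2, s.2]
    have hr0 : 0 < r := div_pos (mul_pos t.2 s.2) hts
    have hco : r / t.1 + r / s.1 = 1 := by
      rw [hr]
      field_simp [t.2.ne', s.2.ne', hts.ne']
      ring
    have hpt : (r / t.1) • (t.1 • x) + (r / s.1) • (s.1 • y) = r • (x + y) := by
      rw [smul_smul, smul_smul, div_mul_cancel₀ _ t.2.ne', div_mul_cancel₀ _ s.2.ne',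
        smul_add]
    have hcvx := hg.2 (Set.mem_univ (t.1 • x)) (Set.mem_univ (s.1 • y))
      (le_of_lt (div_pos hr0 t.2)) (le_of_lt (div_pos hr0 s.2)) hco
    rw [hpt, smul_eq_mul, smul_eq_mul] at hcvx
    have hkey : q (x + y) ≤ g0 (r • (x + y)) / r := hq_term (x + y) ⟨r, hr0⟩
    have hsplit : r / t.1 * g0 (t.1 • x) + r / s.1 * g0 (s.1 • y)
        = r * (g0 (t.1 • x) / t.1 + g0 (s.1 • y) / s.1) := by
      field_simp
    rw [hsplit] at hcvx
    have hfin : q (x + y) ≤ g0 (t.1 • x) / t.1 + g0 (s.1 • y) / s.1 := by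
      rw [le_div_iff₀ hr0] at hkey
      have h3 : q (x + y) * r ≤ r * (g0 (t.1 • x) / t.1 + g0 (s.1 • y) / s.1) :=
        hkey.trans hcvx
      nlinarith [h3, hr0]
    simp only [hε] at ht hs
    linarith
  -- v ≤ q ∘ A
  have hvq : ∀ u, (inner ℝ v u : ℝ) ≤ q (A u) := by
    intro u
    refine le_ciInf fun t => ?_
    have h := hv (t.1 • u)
    rw [inner_smul_right, map_smul] at h
    rw [le_div_iff₀ t.2]
    linarith
  -- v is orthogonal to ker A
  have hker : ∀ u, A u = 0 → (inner ℝ v u : ℝ) = 0 := by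
    intro u hu
    have h1 := hv u
    have h2 := hv (-u)
    rw [map_neg, hu, neg_zero, hg00, inner_neg_right] at h2
    rw [hu, hg00] at h1
    linarith
  -- v is in the range of the adjoint
  have hvR : v ∈ LinearMap.range ((ContinuousLinearMap.adjoint A : Euc m →L[ℝ] Euc n) :
      Euc m →ₗ[ℝ] Euc n) := by
    set R : Submodule ℝ (Euc n) := LinearMap.range
      ((ContinuousLinearMap.adjoint A : Euc m →L[ℝ] Euc n) : Euc m →ₗ[ℝ] Euc n) with hR
    rw [← Submodule.orthogonal_orthogonal R]
    rw [Submodule.mem_orthogonal]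
    intro u hu
    have hAu : A u = 0 := by
      have hz : ∀ w, (inner ℝ (A u) w : ℝ) = 0 := by
        intro w
        have hm : ContinuousLinearMap.adjoint A w ∈ R := LinearMap.mem_range.2 ⟨w, rfl⟩
        have h0 := (Submodule.mem_orthogonal R u).1 hu _ hm
        rw [ContinuousLinearMap.adjoint_inner_left] at h0
        rw [real_inner_comm]
        exact h0
      exact inner_self_eq_zero.1 (hz (A u))
    rw [real_inner_comm]
    exact hker u hAu
  obtain ⟨w, hw0⟩ := LinearMap.mem_range.1 hvR
  have hw : ContinuousLinearMap.adjoint A w = v := hw0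
  -- Hahn-Banach extension
  set pm : (Euc m) →ₗ.[ℝ] ℝ :=
    LinearMap.toPMap ((innerSL ℝ w).toLinearMap) (LinearMap.range (A : Euc n →ₗ[ℝ] Euc m))
    with hpm
  have hwAu : ∀ u : Euc n, (inner ℝ w (A u) : ℝ) = (inner ℝ v u : ℝ) := by
    intro u
    rw [← hw, ContinuousLinearMap.adjoint_inner_left]
  have hpmle : ∀ x : pm.domain, pm x ≤ q x.1 := by
    rintro ⟨x, hx⟩
    obtain ⟨u, hu⟩ := LinearMap.mem_range.1 hx
    have h1 : pm ⟨x, hx⟩ = (inner ℝ w x : ℝ) := rfl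
    have h2 : (A : Euc n →ₗ[ℝ] Euc m) u = A u := rfl
    rw [h1]
    have h3 : x = A u := by rw [← hu, h2]
    subst h3
    exact (hwAu u).le.trans (hvq u)
  obtain ⟨g, hg_ext, hg_le⟩ := exists_extension_of_le_sublinear pm q
    (fun c hc x => hq_smul c hc x) hq_add hpmle
  set lam : Euc m := (InnerProductSpace.toDual ℝ (Euc m)).symm
    (LinearMap.toContinuousLinearMap g) with hlam
  have hlam_app : ∀ z, (inner ℝ lam z : ℝ) = g z := by
    intro z
    rw [hlam, InnerProductSpace.toDual_symm_apply]
    rfl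
  refine ⟨lam, fun z => ?_, ?_⟩
  · rw [hlam_app]
    exact (hg_le z).trans (hq_le z)
  · apply ext_inner_right ℝ
    intro u
    rw [ContinuousLinearMap.adjoint_inner_left, hlam_app]
    have hmem : A u ∈ LinearMap.range (A : Euc n →ₗ[ℝ] Euc m) :=
      LinearMap.mem_range.2 ⟨u, rfl⟩
    have hext := hg_ext ⟨A u, hmem⟩
    have h1 : pm ⟨A u, hmem⟩ = (inner ℝ w (A u) : ℝ) := rfl
    have h2 : g (A u) = (inner ℝ w (A u) : ℝ) := by rw [← h1, ← hext]
    rw [h2, hwAu u]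


variable {m : ℕ} {ϑ : Euc m → EReal}

/-- real convexity inequality from EReal convexity -/
lemma ereal_convex_real (hbot : ∀ y, ϑ y ≠ ⊥) (hconv : ERealConvexOn ϑ)
    {c1 c2 : Euc m} (h1 : ϑ c1 ≠ ⊤) (h2 : ϑ c2 ≠ ⊤) {a b : ℝ}
    (ha : 0 ≤ a) (hb : 0 ≤ b) (hab : a + b = 1) :
    ϑ (a • c1 + b • c2) ≠ ⊤ ∧
      (ϑ (a • c1 + b • c2)).toReal ≤ a * (ϑ c1).toReal + b * (ϑ c2).toReal := by
  have hb' : b = 1 - a := by linarith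
  subst hb'
  have hc := hconv c1 c2 a ha (by linarith)
  have e1 : ϑ c1 = (((ϑ c1).toReal : ℝ) : EReal) := (EReal.coe_toReal h1 (hbot c1)).symm
  have e2 : ϑ c2 = (((ϑ c2).toReal : ℝ) : EReal) := (EReal.coe_toReal h2 (hbot c2)).symm
  rw [e1, e2] at hc
  rw [← EReal.coe_mul, ← EReal.coe_mul, ← EReal.coe_add] at hc
  constructor
  · intro htop
    rw [htop] at hc
    exact (not_le.2 (EReal.coe_lt_top _)) hc
  · have hne : ϑ (a • c1 + (1 - a) • c2) ≠ ⊤ := by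
      intro htop
      rw [htop] at hc
      exact (not_le.2 (EReal.coe_lt_top _)) hc
    have := EReal.toReal_le_toReal hc (hbot _) (EReal.coe_ne_top _)
    rwa [EReal.toReal_coe] at this

/-- the domain of a convex EReal function is convex -/
lemma edom_convex (hbot : ∀ y, ϑ y ≠ ⊥) (hconv : ERealConvexOn ϑ) :
    Convex ℝ (edom ϑ) := by
  intro x hx y hy a b ha hb hab
  exact (ereal_convex_real hbot hconv hx hy ha hb hab).1

/-- A Fréchet subgradient of a convex function is a global subgradient. -/
lemma frechet_global (hbot : ∀ y, ϑ y ≠ ⊥) (hconv : ERealConvexOn ϑ)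
    {x : Euc m} (hx : ϑ x ≠ ⊤) {v : Euc m} (hv : v ∈ frechetSubdiff ϑ x) :
    ∀ z, ϑ x + ((inner ℝ v (z - x) : ℝ) : EReal) ≤ ϑ z := by
  intro z
  by_cases hz : ϑ z = ⊤
  · rw [hz]; exact le_top
  rcases eq_or_ne z x with rfl | hzx
  · simp only [sub_self, inner_zero_right, EReal.coe_zero, add_zero, le_refl]
  set a : ℝ := (ϑ x).toReal with hadef
  set b : ℝ := (ϑ z).toReal with hbdef
  set c : ℝ := (inner ℝ v (z - x) : ℝ) with hcdef
  have ex : ϑ x = ((a : ℝ) : EReal) := (EReal.coe_toReal hx (hbot x)).symm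
  have ez : ϑ z = ((b : ℝ) : EReal) := (EReal.coe_toReal hz (hbot z)).symm
  rw [ex, ez, ← EReal.coe_add, EReal.coe_le_coe_iff]
  by_contra hcon
  push_neg at hcon
  have hn : (0:ℝ) < ‖z - x‖ := by
    rw [norm_pos_iff]; exact sub_ne_zero_of_ne hzx
  set ε : ℝ := (a + c - b) / (2 * ‖z - x‖) with hε
  have hε0 : 0 < ε := by apply div_pos (by linarith) (by linarith)
  obtain ⟨δ, hδ0, hδ⟩ := Metric.eventually_nhds_iff.1 (hv ε hε0)
  set t : ℝ := min 1 (δ / (2 * ‖z - x‖)) with htdef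
  have ht0 : 0 < t := lt_min one_pos (by positivity)
  have ht1 : t ≤ 1 := min_le_left _ _
  set y : Euc m := x + t • (z - x) with hydef
  have hyd : dist y x < δ := by
    rw [hydef, dist_eq_norm]
    have h0 : x + t • (z - x) - x = t • (z - x) := by abel
    rw [h0, norm_smul, Real.norm_eq_abs, abs_of_pos ht0]
    have h1 : t ≤ δ / (2 * ‖z - x‖) := min_le_right _ _
    have h1' : t * ‖z - x‖ ≤ (δ / (2 * ‖z - x‖)) * ‖z - x‖ :=
      mul_le_mul_of_nonneg_right h1 (norm_nonneg _)
    have h2 : (δ / (2 * ‖z - x‖)) * ‖z - x‖ = δ / 2 := by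
      field_simp
    nlinarith [h1', h2, hδ0]
  have hfre := hδ hyd
  have hcvx := hconv z x t ht0.le ht1
  have hzy : t • z + (1 - t) • x = y := by rw [hydef]; module
  rw [hzy, ex, ez, ← EReal.coe_mul, ← EReal.coe_mul, ← EReal.coe_add] at hcvx
  have hytop : ϑ y ≠ ⊤ := by
    intro htop; rw [htop] at hcvx
    exact (not_le.2 (EReal.coe_lt_top _)) hcvx
  have ey : ϑ y = (((ϑ y).toReal : ℝ) : EReal) := (EReal.coe_toReal hytop (hbot y)).symm
  rw [ey, EReal.coe_le_coe_iff] at hcvx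
  rw [ex, ey, ← EReal.coe_add, EReal.coe_le_coe_iff] at hfre
  have hyx : y - x = t • (z - x) := by rw [hydef]; abel
  rw [hyx, inner_smul_right, norm_smul, Real.norm_eq_abs, abs_of_pos ht0] at hfre
  have hεt : ε * (t * ‖z - x‖) = t * (ε * ‖z - x‖) := by ring
  have hεval : ε * ‖z - x‖ = (a + c - b) / 2 := by
    rw [hε]; field_simp
  nlinarith [hfre, hcvx, ht0, hεval]

/-- a global subgradient is a Fréchet subgradient -/
lemma global_frechet {x v : Euc m}
    (h : ∀ z, ϑ x + ((inner ℝ v (z - x) : ℝ) : EReal) ≤ ϑ z) :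
    v ∈ frechetSubdiff ϑ x := by
  intro ε hε
  filter_upwards with y
  refine le_trans (add_le_add_right ?_ _) (h y)
  rw [EReal.coe_le_coe_iff]
  nlinarith [norm_nonneg (y - x), hε]

lemma frechet_mem_lim {x v : Euc m} (h : v ∈ frechetSubdiff ϑ x) : v ∈ limSubdiff ϑ x :=
  ⟨fun _ => x, fun _ => v, tendsto_const_nhds, tendsto_const_nhds, tendsto_const_nhds,
    fun _ => h⟩

/-- limiting subgradients of convex functions are global subgradients -/
lemma lim_global (hbot : ∀ y, ϑ y ≠ ⊥) (hconv : ERealConvexOn ϑ)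
    {x : Euc m} (hx : ϑ x ≠ ⊤) {v : Euc m} (hv : v ∈ limSubdiff ϑ x) :
    ∀ z, ϑ x + ((inner ℝ v (z - x) : ℝ) : EReal) ≤ ϑ z := by
  obtain ⟨xk, vk, hxk, hph, hvk, hfre⟩ := hv
  intro z
  by_cases hz : ϑ z = ⊤
  · rw [hz]; exact le_top
  have hfin : ∀ᶠ k in atTop, ϑ (xk k) ≠ ⊤ := by
    have h1 : ∀ᶠ k in atTop, ϑ (xk k) < ⊤ :=
      hph.eventually_lt_const (lt_top_iff_ne_top.2 hx)
    exact h1.mono fun k h => h.ne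
  have htr : Tendsto (fun k => (ϑ (xk k)).toReal) atTop (𝓝 (ϑ x).toReal) :=
    (EReal.tendsto_toReal hx (hbot x)).comp hph
  have hev : ∀ᶠ k in atTop,
      (ϑ (xk k)).toReal + (inner ℝ (vk k) (z - xk k) : ℝ) ≤ (ϑ z).toReal := by
    filter_upwards [hfin] with k hk
    have hg := frechet_global hbot hconv hk (hfre k) z
    rw [show ϑ (xk k) = (((ϑ (xk k)).toReal : ℝ) : EReal) from
        (EReal.coe_toReal hk (hbot _)).symm,
      show ϑ z = (((ϑ z).toReal : ℝ) : EReal) from (EReal.coe_toReal hz (hbot _)).symm,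
      ← EReal.coe_add, EReal.coe_le_coe_iff] at hg
    exact hg
  have hlim : Tendsto (fun k => (ϑ (xk k)).toReal + (inner ℝ (vk k) (z - xk k) : ℝ)) atTop
      (𝓝 ((ϑ x).toReal + (inner ℝ v (z - x) : ℝ))) :=
    htr.add (hvk.inner (tendsto_const_nhds.sub hxk))
  have hfin2 := le_of_tendsto hlim hev
  rw [show ϑ x = (((ϑ x).toReal : ℝ) : EReal) from (EReal.coe_toReal hx (hbot _)).symm,
    show ϑ z = (((ϑ z).toReal : ℝ) : EReal) from (EReal.coe_toReal hz (hbot _)).symm,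
    ← EReal.coe_add, EReal.coe_le_coe_iff]
  exact hfin2

/-- composing a global subgradient with a strictly differentiable map -/
lemma global_comp {n : ℕ} {f : Euc n → Euc m} {f' : Euc n →L[ℝ] Euc m} {xb : Euc n}
    (hf : HasStrictFDerivAt f f' xb) {lam : Euc m}
    (h : ∀ z, ϑ (f xb) + ((inner ℝ lam (z - f xb) : ℝ) : EReal) ≤ ϑ z) :
    ContinuousLinearMap.adjoint f' lam ∈ frechetSubdiff (fun x => ϑ (f x)) xb := by
  intro ε hε
  have hδ : (0:ℝ) < ε / (‖lam‖ + 1) := by positivity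
  have hlo := hf.hasFDerivAt.isLittleO.def hδ
  filter_upwards [hlo] with y hy
  refine le_trans (add_le_add_right ?_ _) (h (f y))
  rw [EReal.coe_le_coe_iff]
  have h1 : (inner ℝ lam (f y - f xb) : ℝ)
      = (inner ℝ (ContinuousLinearMap.adjoint f' lam) (y - xb) : ℝ)
        + (inner ℝ lam (f y - f xb - f' (y - xb)) : ℝ) := by
    rw [ContinuousLinearMap.adjoint_inner_left, ← inner_add_right]
    congr 1
    abel
  have h2 : |(inner ℝ lam (f y - f xb - f' (y - xb)) : ℝ)|
      ≤ ‖lam‖ * ‖f y - f xb - f' (y - xb)‖ := abs_real_inner_le_norm _ _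
  have h3 : ‖f y - f xb - f' (y - xb)‖ ≤ ε / (‖lam‖ + 1) * ‖y - xb‖ := by
    simpa using hy
  have h4 : ‖lam‖ * (ε / (‖lam‖ + 1) * ‖y - xb‖) ≤ ε * ‖y - xb‖ := by
    rw [div_mul_eq_mul_div, mul_div_assoc', div_le_iff₀ (by positivity : (0:ℝ) < ‖lam‖ + 1)]
    nlinarith [norm_nonneg lam, norm_nonneg (y - xb), hε.le]
  have h5 := abs_le.1 h2
  have h6 : ‖lam‖ * ‖f y - f xb - f' (y - xb)‖ ≤ ‖lam‖ * (ε / (‖lam‖ + 1) * ‖y - xb‖) :=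
    mul_le_mul_of_nonneg_left h3 (norm_nonneg _)
  nlinarith [h1, h5.1, h6, h4]

set_option maxHeartbeats 1000000 in
lemma hard_incl {n : ℕ} {f : Euc n → Euc m} {xb : Euc n}
    {f' : Euc n →L[ℝ] Euc m} (hf : HasStrictFDerivAt f f' xb)
    (hbot : ∀ y, ϑ y ≠ ⊥) (hconv : ERealConvexOn ϑ) (hfin : ϑ (f xb) ≠ ⊤)
    {ℓ : ℝ} (hl : 0 ≤ ℓ) (hlip : LipRelDom ϑ (f xb) ℓ)
    {κ : ℝ} (hmsqc : MSQCAt f (edom ϑ) xb κ)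
    {v : Euc n} (hv : v ∈ limSubdiff (fun x => ϑ (f x)) xb) :
    ∃ lam : Euc m, (∀ z, ϑ (f xb) + ((inner ℝ lam (z - f xb) : ℝ) : EReal) ≤ ϑ z) ∧
      ContinuousLinearMap.adjoint f' lam = v := by
  classical
  obtain ⟨hκ0, hsubr⟩ := hmsqc
  obtain ⟨xk, vk, hxk, hph, hvk, hfre⟩ := hv
  obtain ⟨U, hU, hUlip⟩ := hlip
  set D : Set (Euc m) := edom ϑ with hD
  set ybar : Euc m := f xb with hybar
  have hybarD : ybar ∈ D := hfin
  -- real-valued version of ϑ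
  set th : Euc m → ℝ := fun y => (ϑ y).toReal with hth
  have hlipr : ∀ y ∈ U ∩ D, ∀ z ∈ U ∩ D, th y ≤ th z + ℓ * ‖y - z‖ := by
    rintro y ⟨hyU, hyD⟩ z ⟨hzU, hzD⟩
    have h0 := hUlip y hyU z hzU hyD hzD
    rw [show ϑ y = ((th y : ℝ) : EReal) from (EReal.coe_toReal hyD (hbot _)).symm,
      show ϑ z = ((th z : ℝ) : EReal) from (EReal.coe_toReal hzD (hbot _)).symm,
      ← EReal.coe_add, EReal.coe_le_coe_iff] at h0
    exact h0
  -- a closed ball inside U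
  obtain ⟨r0, hr00, hr0U⟩ := Metric.mem_nhds_iff.1 hU
  set r : ℝ := r0 / 2 with hrdef
  have hr : 0 < r := by positivity
  have hballU : Metric.closedBall ybar r ⊆ U := by
    refine (Metric.closedBall_subset_ball ?_).trans hr0U
    rw [hrdef]; linarith
  -- local Lipschitz constant for f
  obtain ⟨K, s0, hs0, hlf⟩ := hf.exists_lipschitzOnWith
  set Lf : ℝ := (K : ℝ) + 1 with hLfdef
  have hLf0 : 0 < Lf := by positivity
  obtain ⟨η1, hη10, hη1⟩ := Metric.mem_nhds_iff.1 hs0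
  have hflip : ∀ a ∈ ball xb η1, ∀ b ∈ ball xb η1, dist (f a) (f b) ≤ Lf * dist a b := by
    intro a ha b hb
    have h0 := hlf.dist_le_mul a (hη1 ha) b (hη1 hb)
    have h1 : (K : ℝ) * dist a b ≤ Lf * dist a b := by
      apply mul_le_mul_of_nonneg_right _ dist_nonneg
      rw [hLfdef]; linarith
    linarith
  -- continuity of f at xb
  have hcont : Tendsto f (𝓝 xb) (𝓝 ybar) := hf.continuousAt
  obtain ⟨η2, hη20, hη2⟩ := Metric.mem_nhds_iff.1
    (hcont (Metric.ball_mem_nhds ybar (half_pos hr)))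
  -- subregularity neighborhood
  obtain ⟨η3, hη30, hη3⟩ := Metric.mem_nhds_iff.1 hsubr
  set η : ℝ := min η1 (min η2 η3) with hηdef
  have hη0 : 0 < η := lt_min hη10 (lt_min hη20 hη30)
  have hηle1 : η ≤ η1 := min_le_left _ _
  have hηle2 : η ≤ η2 := le_trans (min_le_right _ _) (min_le_left _ _)
  have hηle3 : η ≤ η3 := le_trans (min_le_right _ _) (min_le_right _ _)
  -- constants
  set B : ℝ := ‖v‖ + 1 with hBdef
  have hB1 : 1 ≤ B := by rw [hBdef]; linarith [norm_nonneg v]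
  set Q : ℝ := B + 1 + ℓ * Lf with hQdef
  have hlLf : 0 ≤ ℓ * Lf := mul_nonneg hl hLf0.le
  have hQ1 : 1 ≤ Q := by rw [hQdef]; linarith
  have hQ0 : 0 < Q := by linarith
  have hκQ : 0 ≤ κ * Q := mul_nonneg hκ0 hQ0.le
  set M : ℝ := ℓ + κ * Q + 1 with hMdef
  have hMl : ℓ + κ * Q ≤ M := by rw [hMdef]; linarith
  have hM0 : 0 < M := by rw [hMdef]; linarith
  have hMℓ : ℓ ≤ M := by rw [hMdef]; linarith
  clear_value r Lf B Q M
  -- the penalized convex function Θ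
  set C' : Set (Euc m) := D ∩ Metric.closedBall ybar r with hC'def
  have hybarC : ybar ∈ C' := ⟨hybarD, Metric.mem_closedBall_self hr.le⟩
  haveI : Nonempty C' := ⟨⟨ybar, hybarC⟩⟩
  have hC'U : C' ⊆ U := fun c hc => hballU hc.2
  have hC'conv : Convex ℝ C' :=
    (edom_convex hbot hconv).inter (convex_closedBall _ _)
  set Θ : Euc m → ℝ := fun z => ⨅ c : C', (th c.1 + M * ‖z - c.1‖) with hΘdef
  have hlow : ∀ c : C', th ybar - ℓ * r ≤ th c.1 := by
    rintro ⟨c, hcD, hcB⟩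
    have h0 := hlipr ybar ⟨hballU (Metric.mem_closedBall_self hr.le), hybarD⟩ c
      ⟨hC'U ⟨hcD, hcB⟩, hcD⟩
    have h1 : ‖ybar - c‖ ≤ r := by
      rw [← dist_eq_norm, dist_comm]; exact hcB
    have h2 : ℓ * ‖ybar - c‖ ≤ ℓ * r := mul_le_mul_of_nonneg_left h1 hl
    linarith
  have hΘbdd : ∀ z, BddBelow (Set.range fun c : C' => th c.1 + M * ‖z - c.1‖) := by
    intro z
    refine ⟨th ybar - ℓ * r, ?_⟩
    rintro x ⟨c, rfl⟩
    show th ybar - ℓ * r ≤ th c.1 + M * ‖z - c.1‖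
    have h0 := hlow c
    have h1 : 0 ≤ M * ‖z - c.1‖ := mul_nonneg hM0.le (norm_nonneg _)
    linarith only [h0, h1]
  have hΘle : ∀ z, ∀ c : C', Θ z ≤ th c.1 + M * ‖z - c.1‖ :=
    fun z c => ciInf_le (hΘbdd z) c
  have hΘlip : ∀ a b, Θ a ≤ Θ b + M * ‖a - b‖ := by
    intro a b
    rw [← sub_le_iff_le_add]
    refine le_ciInf fun c => ?_
    show Θ a - M * ‖a - b‖ ≤ th c.1 + M * ‖b - c.1‖
    have h0 := hΘle a c
    have h1 : ‖a - c.1‖ ≤ ‖a - b‖ + ‖b - c.1‖ := by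
      have := norm_sub_le_norm_sub_add_norm_sub a b c.1
      linarith
    have h2 : M * ‖a - c.1‖ ≤ M * (‖a - b‖ + ‖b - c.1‖) :=
      mul_le_mul_of_nonneg_left h1 hM0.le
    have h3 : M * (‖a - b‖ + ‖b - c.1‖) = M * ‖a - b‖ + M * ‖b - c.1‖ := by ring
    linarith
  have hΘeq : ∀ z ∈ C', Θ z = th z := by
    intro z hz
    refine le_antisymm ?_ ?_
    · have := hΘle z ⟨z, hz⟩
      simpa using this
    · refine le_ciInf fun c => ?_
      show th z ≤ th c.1 + M * ‖z - c.1‖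
      have h0 := hlipr z ⟨hC'U hz, hz.1⟩ c.1 ⟨hC'U c.2, c.2.1⟩
      have h1 : ℓ * ‖z - c.1‖ ≤ M * ‖z - c.1‖ :=
        mul_le_mul_of_nonneg_right hMℓ (norm_nonneg _)
      linarith
  have hΘconv : ConvexOn ℝ Set.univ Θ := by
    refine ⟨convex_univ, ?_⟩
    intro z1 _ z2 _ a b ha hb hab
    rw [← sub_nonneg]
    by_contra hcon
    push_neg at hcon
    rw [sub_neg] at hcon
    rw [smul_eq_mul, smul_eq_mul] at hcon
    set ε' : ℝ := (Θ (a • z1 + b • z2) - (a * Θ z1 + b * Θ z2)) / 2 with hε'def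
    have hε'0 : 0 < ε' := by rw [hε'def]; linarith
    clear_value ε'
    rcases eq_or_lt_of_le ha with rfl0 | ha0
    · rw [← rfl0] at hab hcon
      simp only [zero_smul, zero_add, zero_mul] at hcon
      rw [show b = 1 by linarith] at hcon
      simp at hcon
    rcases eq_or_lt_of_le hb with rfl0 | hb0
    · rw [← rfl0] at hab hcon
      simp only [zero_smul, add_zero, zero_mul] at hcon
      rw [show a = 1 by linarith] at hcon
      simp at hcon
    obtain ⟨c1, hc1⟩ := exists_lt_of_ciInf_lt
      (show Θ z1 < Θ z1 + ε' by linarith)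
    obtain ⟨c2, hc2⟩ := exists_lt_of_ciInf_lt
      (show Θ z2 < Θ z2 + ε' by linarith)
    have hcmem : a • c1.1 + b • c2.1 ∈ C' := hC'conv c1.2 c2.2 ha hb hab
    have hkey := hΘle (a • z1 + b • z2) ⟨a • c1.1 + b • c2.1, hcmem⟩
    have hreal := ereal_convex_real hbot hconv c1.2.1 c2.2.1 ha hb hab
    have hnorm : ‖(a • z1 + b • z2) - (a • c1.1 + b • c2.1)‖
        ≤ a * ‖z1 - c1.1‖ + b * ‖z2 - c2.1‖ := by
      have h0 : (a • z1 + b • z2) - (a • c1.1 + b • c2.1)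
          = a • (z1 - c1.1) + b • (z2 - c2.1) := by module
      rw [h0]
      refine (norm_add_le _ _).trans ?_
      rw [norm_smul, norm_smul, Real.norm_eq_abs, Real.norm_eq_abs,
        abs_of_nonneg ha, abs_of_nonneg hb]
    have hth : th (a • c1.1 + b • c2.1) ≤ a * th c1.1 + b * th c2.1 := hreal.2
    have hexp : a * (th c1.1 + M * ‖z1 - c1.1‖) + b * (th c2.1 + M * ‖z2 - c2.1‖)
        ≥ th (a • c1.1 + b • c2.1) + M * ‖(a • z1 + b • z2) - (a • c1.1 + b • c2.1)‖ := by
      have h0 : M * ‖(a • z1 + b • z2) - (a • c1.1 + b • c2.1)‖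
          ≤ M * (a * ‖z1 - c1.1‖ + b * ‖z2 - c2.1‖) :=
        mul_le_mul_of_nonneg_left hnorm hM0.le
      have h1 : M * (a * ‖z1 - c1.1‖ + b * ‖z2 - c2.1‖)
          = a * (M * ‖z1 - c1.1‖) + b * (M * ‖z2 - c2.1‖) := by ring
      have h2 : a * (th c1.1 + M * ‖z1 - c1.1‖)
          = a * th c1.1 + a * (M * ‖z1 - c1.1‖) := by ring
      have h3 : b * (th c2.1 + M * ‖z2 - c2.1‖)
          = b * th c2.1 + b * (M * ‖z2 - c2.1‖) := by ring
      linarith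
    have ha1 : a * (th c1.1 + M * ‖z1 - c1.1‖) < a * (Θ z1 + ε') :=
      (mul_lt_mul_iff_right₀ ha0).2 hc1
    have hb1 : b * (th c2.1 + M * ‖z2 - c2.1‖) < b * (Θ z2 + ε') :=
      (mul_lt_mul_iff_right₀ hb0).2 hc2
    have ha2 : a * (Θ z1 + ε') = a * Θ z1 + a * ε' := by ring
    have hb2 : b * (Θ z2 + ε') = b * Θ z2 + b * ε' := by ring
    have hab1 : a * ε' + b * ε' = ε' := by rw [← add_mul, hab, one_mul]
    linarith [hkey, hexp, ha1, hb1]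
  -- eventual properties along the sequence
  have hvkB : ∀ᶠ k in atTop, ‖vk k‖ ≤ B := by
    have h0 : Tendsto (fun k => ‖vk k‖) atTop (𝓝 ‖v‖) := hvk.norm
    exact h0.eventually_le_const (by rw [hBdef]; linarith)
  have hphfin : ∀ᶠ k in atTop, ϑ (f (xk k)) ≠ ⊤ := by
    have h1 : ∀ᶠ k in atTop, ϑ (f (xk k)) < ⊤ :=
      hph.eventually_lt_const (lt_top_iff_ne_top.2 hfin)
    exact h1.mono fun k h => h.ne
  -- THE KEY STEP: affine inequality in the limit point of each subgradient
  have key1 : ∀ ε : ℝ, 0 < ε → ε ≤ 1 →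
      ∀ᶠ k in atTop, ∀ u : Euc n,
        Θ (f (xk k)) + ((inner ℝ (vk k) u : ℝ) - 3 * ε * ‖u‖) ≤ Θ (f (xk k) + f' u) := by
    intro ε hε hε1
    have hδ'0 : (0:ℝ) < ε / (M + 1) := div_pos hε (by linarith)
    obtain ⟨η4, hη40, hη4⟩ := Metric.eventually_nhds_iff.1 (hf.isLittleO.def hδ'0)
    have hnear : ∀ᶠ k in atTop, xk k ∈ ball xb (min (η/2) (η4/2)) :=
      hxk (Metric.ball_mem_nhds xb (lt_min (half_pos hη0) (half_pos hη40)))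
    filter_upwards [hvkB, hphfin, hnear] with k hkB hkfin hknear
    set xkk := xk k with hxkk
    set vkk := vk k with hvkk
    have hknear' : dist xkk xb < η / 2 := lt_of_lt_of_le hknear (min_le_left _ _)
    have hknear4 : dist xkk xb < η4 / 2 := lt_of_lt_of_le hknear (min_le_right _ _)
    have hxkkD : f xkk ∈ D := hkfin
    have hxkkB : f xkk ∈ ball ybar (r/2) := by
      apply hη2
      apply mem_ball.2
      calc dist xkk xb < η / 2 := hknear'
      _ < η2 := by linarith [hηle2, hη0]
    have hxkkC : f xkk ∈ C' :=
      ⟨hxkkD, Metric.closedBall_subset_closedBall (by linarith : r/2 ≤ r)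
        (Metric.ball_subset_closedBall hxkkB)⟩
    set δ : ℝ := ε / Q with hδdef
    have hδ0 : 0 < δ := by rw [hδdef]; exact div_pos hε hQ0
    have hδ1 : δ ≤ 1 := by
      rw [hδdef, div_le_one hQ0]; linarith
    set c1 : ℝ := 2 + κ * Lf with hc1def
    have hκLf : 0 ≤ κ * Lf := mul_nonneg hκ0 hLf0.le
    have hc10 : 2 ≤ c1 := by rw [hc1def]; linarith
    obtain ⟨sk, hsk0, hsk⟩ := Metric.eventually_nhds_iff.1 (hfre k ε hε)
    set ρ : ℝ := min (sk / c1) (min ((η/2) / c1) (η4/2)) with hρdef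
    have hc1pos : (0:ℝ) < c1 := by linarith only [hc10]
    have hρ0 : 0 < ρ :=
      lt_min (div_pos hsk0 hc1pos)
        (lt_min (div_pos (by linarith only [hη0]) hc1pos) (by linarith only [hη40]))
    have hρsk : ρ * c1 ≤ sk := by
      have h0 : ρ ≤ sk / c1 := min_le_left _ _
      rw [le_div_iff₀ (by linarith : (0:ℝ) < c1)] at h0
      linarith
    have hρη : ρ * c1 ≤ η / 2 := by
      have h0 : ρ ≤ (η/2) / c1 := le_trans (min_le_right _ _) (min_le_left _ _)
      rw [le_div_iff₀ (by linarith : (0:ℝ) < c1)] at h0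
      linarith
    have hρη4 : ρ ≤ η4 / 2 := le_trans (min_le_right _ _) (min_le_right _ _)
    clear_value δ c1 ρ
    have hρle : ρ ≤ η / 2 := by
      have h0 : ρ * 2 ≤ ρ * c1 := mul_le_mul_of_nonneg_left hc10 hρ0.le
      linarith only [h0, hρη, hρ0]
    -- the local penalized inequality
    have hloc : ∀ y, dist y xkk < ρ →
        Θ (f xkk) + ((inner ℝ vkk (y - xkk) : ℝ) - 2 * ε * ‖y - xkk‖) ≤ Θ (f y) := by
      intro y hy
      rcases eq_or_ne y xkk with rfl | hyne
      · simp
      set dy : ℝ := dist y xkk with hdydef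
      have hdy0 : 0 < dy := dist_pos.2 hyne
      have hdynorm : dy = ‖y - xkk‖ := dist_eq_norm _ _
      have hyball : y ∈ ball xb η := by
        rw [mem_ball]
        calc dist y xb ≤ dist y xkk + dist xkk xb := dist_triangle _ _ _
        _ < ρ + η/2 := by linarith [hy, hknear']
        _ ≤ η := by linarith [hρle]
      have hxkkball : xkk ∈ ball xb η := by
        rw [mem_ball]; linarith [hknear', hη0]
      -- subregularity at y
      have hsuby : infDist y (f ⁻¹' D) ≤ κ * infDist (f y) D := by
        apply hη3
        exact mem_ball.2 (lt_of_lt_of_le (mem_ball.1 hyball) hηle3)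
      have hinfD : infDist (f y) D ≤ Lf * dy := by
        calc infDist (f y) D ≤ dist (f y) (f xkk) := infDist_le_dist_of_mem hxkkD
        _ ≤ Lf * dist y xkk := hflip y (mem_ball.2 (lt_of_lt_of_le (mem_ball.1 hyball) hηle1))
            xkk (mem_ball.2 (lt_of_lt_of_le (mem_ball.1 hxkkball) hηle1))
        _ = Lf * dy := rfl
      have hlt : infDist y (f ⁻¹' D) < κ * infDist (f y) D + δ * dy := by
        have h0 : 0 < δ * dy := mul_pos hδ0 hdy0
        linarith
      obtain ⟨x', hx'D, hx'dist⟩ := (infDist_lt_iff ⟨xb, by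
        simp only [Set.mem_preimage]; exact hybarD⟩).1 hlt
      set d' : ℝ := dist y x' with hd'def
      have hd'0 : 0 ≤ d' := dist_nonneg
      have hd'le : d' ≤ (κ * Lf + δ) * dy := by
        have h0 : κ * infDist (f y) D ≤ κ * (Lf * dy) :=
          mul_le_mul_of_nonneg_left hinfD hκ0
        have h1 : κ * (Lf * dy) + δ * dy = (κ * Lf + δ) * dy := by ring
        linarith
      have hx'xkk : dist x' xkk ≤ c1 * dy := by
        calc dist x' xkk ≤ dist x' y + dist y xkk := dist_triangle _ _ _
        _ = d' + dy := by rw [dist_comm x' y]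
        _ ≤ (κ * Lf + δ) * dy + dy := by linarith [hd'le]
        _ ≤ c1 * dy := by
            have h0 : δ * dy ≤ 1 * dy := mul_le_mul_of_nonneg_right hδ1 hdy0.le
            have h1 : (κ * Lf + δ) * dy + dy = κ * Lf * dy + δ * dy + dy := by ring
            have h2 : c1 * dy = 2 * dy + κ * Lf * dy := by rw [hc1def]; ring
            linarith
      have hx'sk : dist x' xkk < sk := by
        calc dist x' xkk ≤ c1 * dy := hx'xkk
        _ < c1 * ρ := by
            apply (mul_lt_mul_iff_right₀ (by linarith : (0:ℝ) < c1)).2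
            exact hy
        _ ≤ sk := by
            have : c1 * ρ = ρ * c1 := by ring
            linarith
      have hx'ball : x' ∈ ball xb η := by
        rw [mem_ball]
        calc dist x' xb ≤ dist x' xkk + dist xkk xb := dist_triangle _ _ _
        _ < c1 * ρ + η / 2 := by
            have h20 := (mul_lt_mul_iff_right₀ (by linarith : (0:ℝ) < c1)).2 hy
            linarith only [hx'xkk, hknear', h20]
        _ ≤ η := by
            have h21 : c1 * ρ = ρ * c1 := by ring
            linarith only [h21, hρη]
      have hfx'D : f x' ∈ D := hx'D
      have hfx'B : f x' ∈ ball ybar (r/2) := by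
        apply hη2
        exact mem_ball.2 (lt_of_lt_of_le (mem_ball.1 hx'ball) hηle2)
      have hfx'U : f x' ∈ U := hballU (Metric.closedBall_subset_closedBall
        (by linarith : r/2 ≤ r) (Metric.ball_subset_closedBall hfx'B))
      have hfx'flip : dist (f x') (f y) ≤ Lf * d' := by
        have := hflip x' (mem_ball.2 (lt_of_lt_of_le (mem_ball.1 hx'ball) hηle1))
          y (mem_ball.2 (lt_of_lt_of_le (mem_ball.1 hyball) hηle1))
        rw [hd'def, dist_comm y x']
        exact this
      -- Fréchet inequality at x'
      have hfreER : ϑ (f xkk) + (((inner ℝ vkk (x' - xkk) : ℝ) - ε * ‖x' - xkk‖ : ℝ) : EReal)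
          ≤ ϑ (f x') := hsk hx'sk
      have hfrereal : th (f xkk) + ((inner ℝ vkk (x' - xkk) : ℝ) - ε * ‖x' - xkk‖)
          ≤ th (f x') := by
        rw [show (ϑ (f xkk) : EReal) = ((th (f xkk) : ℝ) : EReal) from
            (EReal.coe_toReal hkfin (hbot _)).symm,
          show (ϑ (f x') : EReal) = ((th (f x') : ℝ) : EReal) from
            (EReal.coe_toReal hfx'D (hbot _)).symm,
          ← EReal.coe_add, EReal.coe_le_coe_iff] at hfreER
        exact hfreER
      -- conclude by bounding every term of the infimum
      rw [hΘeq (f xkk) hxkkC]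
      refine le_ciInf fun c => ?_
      show th (f xkk) + ((inner ℝ vkk (y - xkk) : ℝ) - 2 * ε * ‖y - xkk‖)
        ≤ th c.1 + M * ‖f y - c.1‖
      set N : ℝ := ‖f y - c.1‖ with hNdef
      have hN0 : 0 ≤ N := norm_nonneg _
      have hi : th (f x') ≤ th c.1 + ℓ * ‖f x' - c.1‖ :=
        hlipr (f x') ⟨hfx'U, hfx'D⟩ c.1 ⟨hC'U c.2, c.2.1⟩
      have hii : ‖f x' - c.1‖ ≤ Lf * d' + N := by
        calc ‖f x' - c.1‖ ≤ ‖f x' - f y‖ + ‖f y - c.1‖ :=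
          norm_sub_le_norm_sub_add_norm_sub _ _ _
        _ ≤ Lf * d' + N := by
            rw [← dist_eq_norm]
            exact add_le_add_left hfx'flip N
      have hiii : ℓ * ‖f x' - c.1‖ ≤ ℓ * (Lf * d' + N) :=
        mul_le_mul_of_nonneg_left hii hl
      have hcs : (inner ℝ vkk (x' - xkk) : ℝ) ≥ (inner ℝ vkk (y - xkk) : ℝ) - B * d' := by
        have h0 : (inner ℝ vkk (x' - xkk) : ℝ)
            = (inner ℝ vkk (y - xkk) : ℝ) + (inner ℝ vkk (x' - y) : ℝ) := by
          rw [← inner_add_right]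
          congr 1
          abel
        have h1 : |(inner ℝ vkk (x' - y) : ℝ)| ≤ ‖vkk‖ * ‖x' - y‖ :=
          abs_real_inner_le_norm _ _
        have h2 : ‖x' - y‖ = d' := by rw [hd'def, dist_comm, dist_eq_norm]
        have h3 : ‖vkk‖ * ‖x' - y‖ ≤ B * d' := by
          rw [h2]
          exact mul_le_mul_of_nonneg_right hkB hd'0
        have h4 := abs_le.1 h1
        linarith [h4.1, h3]
      have hnxk : ‖x' - xkk‖ ≤ d' + dy := by
        rw [← dist_eq_norm]
        calc dist x' xkk ≤ dist x' y + dist y xkk := dist_triangle _ _ _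
        _ = d' + dy := by rw [dist_comm x' y]
      have hεxk : ε * ‖x' - xkk‖ ≤ ε * d' + ε * dy := by
        have h0 : ε * ‖x' - xkk‖ ≤ ε * (d' + dy) := mul_le_mul_of_nonneg_left hnxk hε.le
        have h1 : ε * (d' + dy) = ε * d' + ε * dy := by ring
        linarith
      have hd'N : d' ≤ κ * N + δ * dy := by
        have h0 : infDist (f y) D ≤ N := by
          rw [hNdef, ← dist_eq_norm]
          exact infDist_le_dist_of_mem c.2.1
        have h1 : κ * infDist (f y) D ≤ κ * N := mul_le_mul_of_nonneg_left h0 hκ0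
        linarith [hx'dist]
      have hQd' : (B + ε + ℓ * Lf) * d' ≤ Q * (κ * N + δ * dy) := by
        have h0 : (B + ε + ℓ * Lf) * d' ≤ Q * d' := by
          apply mul_le_mul_of_nonneg_right _ hd'0
          rw [hQdef]; linarith
        have h1 : Q * d' ≤ Q * (κ * N + δ * dy) :=
          mul_le_mul_of_nonneg_left hd'N hQ0.le
        linarith
      have hQδ : Q * δ = ε := by
        rw [hδdef]; field_simp
      have hQd'2 : (B + ε + ℓ * Lf) * d' ≤ κ * Q * N + ε * dy := by
        have h2 : Q * (κ * N + δ * dy) = κ * Q * N + Q * δ * dy := by ring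
        have h3 : Q * δ * dy = ε * dy := by rw [hQδ]
        linarith
      -- assemble
      have hMN : κ * Q * N + N ≤ M * N - ℓ * N := by
        have h0 : (ℓ + κ * Q + 1) * N ≤ M * N := by
          apply mul_le_mul_of_nonneg_right _ hN0
          rw [hMdef]
        have h1 : (ℓ + κ * Q + 1) * N = ℓ * N + κ * Q * N + N := by ring
        linarith only [h0, h1]
      have hexp2 : (B + ε + ℓ * Lf) * d' = B * d' + ε * d' + ℓ * Lf * d' := by ring
      have hexp3 : ℓ * (Lf * d' + N) = ℓ * Lf * d' + ℓ * N := by ring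
      have hgoal : th (f xkk) + ((inner ℝ vkk (y - xkk) : ℝ) - 2 * ε * dy)
          ≤ th c.1 + M * N := by
        linarith only [hi, hiii, hfrereal, hcs, hεxk, hQd'2, hMN, hexp2, hexp3, hN0]
      rw [← hdynorm]
      exact hgoal
    -- upgrade to the affine function via strict differentiability, then globalize
    set G : Euc n → ℝ := fun y => Θ (f xkk + f' (y - xkk)) with hGdef
    have hGconv : ConvexOn ℝ Set.univ G := by
      refine ⟨convex_univ, ?_⟩
      intro y1 _ y2 _ a b ha hb hab
      have hb' : b = 1 - a := by linarith
      subst hb'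
      have h0 : f xkk + f' ((a • y1 + (1 - a) • y2) - xkk)
          = a • (f xkk + f' (y1 - xkk)) + (1 - a) • (f xkk + f' (y2 - xkk)) := by
        simp only [map_sub, map_add, map_smul]
        module
      rw [hGdef]
      simp only
      rw [h0]
      exact hΘconv.2 (Set.mem_univ _) (Set.mem_univ _) ha hb hab
    have hGxkk : G xkk = Θ (f xkk) := by
      rw [hGdef]
      simp
    have hGloc : ∀ y, dist y xkk < ρ →
        G xkk + ((inner ℝ vkk (y - xkk) : ℝ) - 3 * ε * ‖y - xkk‖) ≤ G y := by
      intro y hy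
      have hyball4 : dist (y, xkk) (xb, xb) < η4 := by
        rw [Prod.dist_eq]
        apply max_lt
        · calc dist y xb ≤ dist y xkk + dist xkk xb := dist_triangle _ _ _
          _ < ρ + η4/2 := by linarith [hknear4]
          _ ≤ η4 := by linarith [hρη4]
        · linarith [hknear4, hη40]
      have hmody := hη4 hyball4
      simp only at hmody
      have hGy : Θ (f y) ≤ G y + M * (ε / (M+1)) * ‖y - xkk‖ := by
        have h0 := hΘlip (f y) (f xkk + f' (y - xkk))
        have h1 : ‖f y - (f xkk + f' (y - xkk))‖ ≤ ε / (M+1) * ‖y - xkk‖ := by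
          have h2 : f y - (f xkk + f' (y - xkk)) = f y - f xkk - f' (y - xkk) := by abel
          rw [h2]
          exact hmody
        have h3 : M * ‖f y - (f xkk + f' (y - xkk))‖ ≤ M * (ε / (M+1) * ‖y - xkk‖) :=
          mul_le_mul_of_nonneg_left h1 hM0.le
        rw [hGdef]
        simp only
        have h4 : M * (ε / (M+1) * ‖y - xkk‖) = M * (ε / (M+1)) * ‖y - xkk‖ := by ring
        linarith only [h0, h3, h4]
      have h4 := hloc y hy
      have h5 : M * (ε / (M+1)) ≤ ε := by
        have hq1 : M / (M + 1) ≤ 1 := by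
          rw [div_le_one (by linarith : (0:ℝ) < M + 1)]
          linarith
        have hq2 : ε * (M / (M + 1)) ≤ ε * 1 := mul_le_mul_of_nonneg_left hq1 hε.le
        calc M * (ε / (M + 1)) = ε * (M / (M + 1)) := by ring
        _ ≤ ε * 1 := hq2
        _ = ε := by ring
      have h6 : M * (ε / (M+1)) * ‖y - xkk‖ ≤ ε * ‖y - xkk‖ := by
        apply mul_le_mul_of_nonneg_right h5 (norm_nonneg _)
      rw [hGxkk]
      linarith only [h4, hGy, h6]
    have hGglob := convex_loc_glob hGconv hρ0 hGloc
    intro u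
    have := hGglob u
    have h7 : (xkk + u) - xkk = u := by abel
    rw [hGxkk, hGdef] at this
    simp only at this
    rw [h7] at this
    exact this
  -- pass to the limit in k, then in ε
  have hΘcont : Continuous Θ := by
    have : LipschitzWith (Real.toNNReal M) Θ := by
      apply LipschitzWith.of_dist_le_mul
      intro a b
      rw [Real.dist_eq, Real.coe_toNNReal M hM0.le, dist_eq_norm]
      rw [abs_le]
      constructor
      · have := hΘlip b a
        have h0 : ‖b - a‖ = ‖a - b‖ := norm_sub_rev _ _
        nlinarith [this, h0]
      · linarith [hΘlip a b]
    exact this.continuous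
  have key2 : ∀ u : Euc n, Θ ybar + (inner ℝ v u : ℝ) ≤ Θ (ybar + f' u) := by
    intro u
    have hstep : ∀ ε : ℝ, 0 < ε → ε ≤ 1 →
        Θ ybar + ((inner ℝ v u : ℝ) - 3 * ε * ‖u‖) ≤ Θ (ybar + f' u) := by
      intro ε hε hε1
      have hk := key1 ε hε hε1
      have hfxk : Tendsto (fun k => f (xk k)) atTop (𝓝 ybar) := hcont.comp hxk
      have hl1 : Tendsto (fun k => Θ (f (xk k)) + ((inner ℝ (vk k) u : ℝ) - 3 * ε * ‖u‖))
          atTop (𝓝 (Θ ybar + ((inner ℝ v u : ℝ) - 3 * ε * ‖u‖))) := by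
        apply Tendsto.add
        · exact (hΘcont.tendsto _).comp hfxk
        · apply Tendsto.sub _ tendsto_const_nhds
          exact hvk.inner tendsto_const_nhds
      have hl2 : Tendsto (fun k => Θ (f (xk k) + f' u)) atTop (𝓝 (Θ (ybar + f' u))) := by
        have : Continuous fun z : Euc m => Θ (z + f' u) :=
          hΘcont.comp (continuous_id.add continuous_const)
        exact (this.tendsto _).comp hfxk
      have hev : (fun k => Θ (f (xk k)) + ((inner ℝ (vk k) u : ℝ) - 3 * ε * ‖u‖))
          ≤ᶠ[atTop] fun k => Θ (f (xk k) + f' u) := hk.mono fun k h => h u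
      exact le_of_tendsto_of_tendsto hl1 hl2 hev
    by_contra hcon
    push_neg at hcon
    set g : ℝ := Θ ybar + (inner ℝ v u : ℝ) - Θ (ybar + f' u) with hgdef
    have hg0 : 0 < g := by rw [hgdef]; linarith
    clear_value g
    set ε : ℝ := min 1 (g / (3 * (‖u‖ + 1))) with hεdef
    have hε0 : 0 < ε := lt_min one_pos (div_pos hg0 (by positivity))
    have hε1 : ε ≤ 1 := min_le_left _ _
    have := hstep ε hε0 hε1
    have h8 : 3 * ε * ‖u‖ < g := by
      have h9 : ε ≤ g / (3 * (‖u‖ + 1)) := min_le_right _ _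
      have h10 : 3 * ε * ‖u‖ ≤ 3 * (g / (3 * (‖u‖ + 1))) * ‖u‖ := by
        have h12 : ε * ‖u‖ ≤ (g / (3 * (‖u‖ + 1))) * ‖u‖ :=
          mul_le_mul_of_nonneg_right h9 (norm_nonneg u)
        linarith
      have h11 : 3 * (g / (3 * (‖u‖ + 1))) * ‖u‖ < g := by
        have hX : (0:ℝ) < 3 * (‖u‖ + 1) := by positivity
        rw [show 3 * (g / (3 * (‖u‖ + 1))) * ‖u‖ = 3 * g * ‖u‖ / (3 * (‖u‖ + 1)) from by
          ring, div_lt_iff₀ hX]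
        nlinarith [norm_nonneg u, hg0]
      linarith
    rw [hgdef] at h8
    linarith
  -- Hahn-Banach: extract the multiplier
  set g0 : Euc m → ℝ := fun z => Θ (ybar + z) - Θ ybar with hg0def
  have hg0conv : ConvexOn ℝ Set.univ g0 := by
    refine ⟨convex_univ, ?_⟩
    intro z1 _ z2 _ a b ha hb hab
    have hb' : b = 1 - a := by linarith
    subst hb'
    have h0 : ybar + (a • z1 + (1 - a) • z2) = a • (ybar + z1) + (1 - a) • (ybar + z2) := by
      module
    rw [hg0def]
    simp only
    rw [h0, smul_eq_mul, smul_eq_mul]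
    have h9 := hΘconv.2 (Set.mem_univ (ybar + z1)) (Set.mem_univ (ybar + z2)) ha hb hab
    rw [smul_eq_mul, smul_eq_mul] at h9
    linarith only [h9]
  have hg00 : g0 0 = 0 := by rw [hg0def]; simp
  have hg0low : ∀ z, -(M * ‖z‖) ≤ g0 z := by
    intro z
    have h0 := hΘlip ybar (ybar + z)
    have h1 : ‖ybar - (ybar + z)‖ = ‖z‖ := by
      rw [show ybar - (ybar + z) = -z by abel, norm_neg]
    rw [h1] at h0
    rw [hg0def]
    simp only
    linarith
  have hvg0 : ∀ u, (inner ℝ v u : ℝ) ≤ g0 (f' u) := by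
    intro u
    have := key2 u
    rw [hg0def]
    simp only
    linarith
  obtain ⟨lam, hlam1, hlam2⟩ := exists_multiplier f' g0 hg0conv hg00 M hg0low v hvg0
  refine ⟨lam, ?_, hlam2⟩
  -- lam is a global subgradient of ϑ at ybar
  have hsub_local : ∀ z ∈ C', th ybar + (inner ℝ lam (z - ybar) : ℝ) ≤ th z := by
    intro z hz
    have h0 := hlam1 (z - ybar)
    rw [hg0def] at h0
    simp only at h0
    rw [show ybar + (z - ybar) = z by abel] at h0
    rw [hΘeq z hz, hΘeq ybar hybarC] at h0
    linarith
  intro z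
  by_cases hz : ϑ z = ⊤
  · rw [hz]; exact le_top
  -- globalize by convexity
  have hzD : z ∈ D := hz
  have hreal : th ybar + (inner ℝ lam (z - ybar) : ℝ) ≤ th z := by
    rcases eq_or_ne z ybar with rfl | hzne
    · simp
    set t : ℝ := min 1 (r / ‖z - ybar‖) with htdef
    have hnz : 0 < ‖z - ybar‖ := norm_pos_iff.2 (sub_ne_zero_of_ne hzne)
    have ht0 : 0 < t := lt_min one_pos (div_pos hr hnz)
    have ht1 : t ≤ 1 := min_le_left _ _
    set zt : Euc m := t • z + (1 - t) • ybar with hztdef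
    have hztconv := ereal_convex_real hbot hconv (a := t) (b := 1 - t) hz hfin
      ht0.le (by linarith) (by ring)
    have hztD : zt ∈ D := by rw [hztdef]; exact hztconv.1
    have hztball : zt ∈ Metric.closedBall ybar r := by
      rw [Metric.mem_closedBall, dist_eq_norm]
      have h0 : zt - ybar = t • (z - ybar) := by rw [hztdef]; module
      rw [h0, norm_smul, Real.norm_eq_abs, abs_of_pos ht0]
      have h1 : t ≤ r / ‖z - ybar‖ := min_le_right _ _
      rw [← le_div_iff₀ hnz]
      exact h1
    have hsubz := hsub_local zt ⟨hztD, hztball⟩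
    have hconvz : th zt ≤ t * th z + (1 - t) * th ybar := hztconv.2
    have hinner : (inner ℝ lam (zt - ybar) : ℝ) = t * (inner ℝ lam (z - ybar) : ℝ) := by
      have h0 : zt - ybar = t • (z - ybar) := by rw [hztdef]; module
      rw [h0, inner_smul_right]
    rw [hinner] at hsubz
    nlinarith [hsubz, hconvz, ht0]
  rw [show (ϑ ybar : EReal) = ((th ybar : ℝ) : EReal) from
      (EReal.coe_toReal hfin (hbot _)).symm,
    show (ϑ z : EReal) = ((th z : ℝ) : EReal) from (EReal.coe_toReal hz (hbot _)).symm,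
    ← EReal.coe_add, EReal.coe_le_coe_iff]
  exact hreal

/-- equality chain rule for limiting subgradients under metric
subregularity, with lower regularity of the composition. -/
theorem stmt11 {n m : ℕ} (f : Euc n → Euc m) (ϑ : Euc m → EReal) (xb : Euc n)
    (f' : Euc n →L[ℝ] Euc m) (hf : HasStrictFDerivAt f f' xb)
    (hbot : ∀ y, ϑ y ≠ ⊥) (hconv : ERealConvexOn ϑ) (hfin : ϑ (f xb) ≠ ⊤)
    (hlsc : ∃ U ∈ 𝓝 (f xb), ∀ y ∈ U, LowerSemicontinuousAt ϑ y)
    (ℓ : ℝ) (hl : 0 ≤ ℓ) (hlip : LipRelDom ϑ (f xb) ℓ)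
    (κ : ℝ) (hmsqc : MSQCAt f (edom ϑ) xb κ) :
    limSubdiff (fun x => ϑ (f x)) xb = frechetSubdiff (fun x => ϑ (f x)) xb ∧
    limSubdiff (fun x => ϑ (f x)) xb =
      (ContinuousLinearMap.adjoint f') '' limSubdiff ϑ (f xb) := by
  have hglob_of_lim : ∀ w ∈ limSubdiff (fun x => ϑ (f x)) xb,
      ∃ lam, (∀ z, ϑ (f xb) + ((inner ℝ lam (z - f xb) : ℝ) : EReal) ≤ ϑ z) ∧
        ContinuousLinearMap.adjoint f' lam = w :=
    fun w hw => hard_incl hf hbot hconv hfin hl hlip hmsqc hw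
  constructor
  · apply Set.Subset.antisymm
    · intro w hw
      obtain ⟨lam, hlam, rfl⟩ := hglob_of_lim w hw
      exact global_comp hf hlam
    · exact fun w hw => frechet_mem_lim hw
  · apply Set.Subset.antisymm
    · intro w hw
      obtain ⟨lam, hlam, hadj⟩ := hglob_of_lim w hw
      exact ⟨lam, frechet_mem_lim (global_frechet hlam), hadj⟩
    · rintro w ⟨lam, hlamlim, rfl⟩
      have hlam := lim_global hbot hconv hfin hlamlim
      exact frechet_mem_lim (global_comp hf hlam)
end
end
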